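/- arXiv:0706.1526 — 4 statements merged into one kernel-verified Lean document; each statement's English description precedes it below -/
import Mathlib

section
/- Fix natural numbers Δ and k. Suppose that every finite nonempty outerplanar graph with maximum degree at most Δ contains a k-vertex. Then every finite outerplanar graph G with maximum degree at most Δ satisfies ind(G²) ≤ k, i.e., every nonempty induced subgraph of G² has a vertex of degree at most k in that subgraph. -/
open SimpleGraph

/-- The square `G²` of a simple graph `G`: two distinct vertices are adjacent iff
they are adjacent in `G` or have a common neighbor in `G`. -/
def SimpleGraph.square {V : Type*} (G : SimpleGraph V) : SimpleGraph V where
  Adj u v := u ≠ v ∧ (G.Adj u v ∨ ∃ w, G.Adj u w ∧ G.Adj w v)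
  symm := ⟨by
    rintro u v ⟨hne, h | ⟨w, h1, h2⟩⟩
    · exact ⟨hne.symm, Or.inl h.symm⟩
    · exact ⟨hne.symm, Or.inr ⟨w, h2.symm, h1.symm⟩⟩⟩
  loopless := ⟨fun u h => h.1 rfl⟩

/-- A finite simple graph is outerplanar iff it has a one-page book embedding:
a linear order (here realized by an injection into `ℕ`) on its vertices such that
no two edges "cross", i.e. there are no vertices `a < c < b < d` with both
`{a,b}` and `{c,d}` edges. -/
def SimpleGraph.IsOuterplanar {V : Type*} (G : SimpleGraph V) : Prop :=
  ∃ f : V → ℕ, Function.Injective f ∧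
    ∀ a b c d : V, G.Adj a b → G.Adj c d →
      ¬(f a < f c ∧ f c < f b ∧ f b < f d)

/-- The degree of a vertex, as the cardinality of its neighbor set. -/
noncomputable def SimpleGraph.deg {V : Type*} (G : SimpleGraph V) (v : V) : ℕ :=
  (G.neighborSet v).ncard

/-- The maximum degree `Δ` of a finite graph. -/
noncomputable def SimpleGraph.maxDeg {V : Type*} [Fintype V] (G : SimpleGraph V) : ℕ :=
  Finset.univ.sup fun v => G.deg v

/-- The degree of `v` inside the subgraph of `G` induced by the vertex set `s`. -/
noncomputable def SimpleGraph.degIn {V : Type*} (G : SimpleGraph V) (s : Finset V) (v : V) : ℕ :=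
  {u | u ∈ s ∧ G.Adj v u}.ncard

/-- The inductiveness (degeneracy) of a finite graph: the maximum over all nonempty
induced subgraphs of the minimum degree of the induced subgraph. -/
noncomputable def SimpleGraph.inductiveness {V : Type*} [Fintype V]
    (G : SimpleGraph V) : ℕ :=
  Finset.univ.powerset.sup fun s =>
    if h : s.Nonempty then s.inf' h (G.degIn s) else 0

/-- A graph is chordal if every cycle of length at least 4 has a chord: two
vertices of the cycle, adjacent in the graph, whose joining edge is not an edge
of the cycle (i.e. they are nonconsecutive on the cycle). -/
def SimpleGraph.IsChordal {V : Type*} (G : SimpleGraph V) : Prop :=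
  ∀ ⦃v : V⦄ (w : G.Walk v v), w.IsCycle → 4 ≤ w.length →
    ∃ a b : V, a ∈ w.support ∧ b ∈ w.support ∧ G.Adj a b ∧ s(a, b) ∉ w.edges

/-- A finite graph is biconnected if it has at least 3 vertices, is connected,
and deleting any single vertex leaves it connected. -/
def SimpleGraph.Biconnected {V : Type*} [Fintype V] (G : SimpleGraph V) : Prop :=
  3 ≤ Fintype.card V ∧ G.Connected ∧
    ∀ v : V, ((G.induce {u | u ≠ v}).Connected)

/-- `G` is `k`-choosable: for every assignment of lists of exactly `k` colors to
the vertices there is a proper coloring choosing each vertex's color from its list. -/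
def SimpleGraph.Choosable {V : Type*} (G : SimpleGraph V) (k : ℕ) : Prop :=
  ∀ L : V → Finset ℕ, (∀ v, (L v).card = k) →
    ∃ c : V → ℕ, (∀ v, c v ∈ L v) ∧ ∀ u v, G.Adj u v → c u ≠ c v

/-- `F₄`: the 6-vertex graph obtained from the triangle `0 1 2` by adding, for each
edge of the triangle, a new vertex (`3 = y₀₁`, `4 = y₁₂`, `5 = y₀₂`) adjacent to
exactly the two endpoints of that edge. -/
def F4 : SimpleGraph (Fin 6) :=
  SimpleGraph.fromEdgeSet
    {s(0, 1), s(1, 2), s(0, 2), s(3, 0), s(3, 1), s(4, 1), s(4, 2), s(5, 0), s(5, 2)}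

/-- `F₆`: the 12-vertex graph obtained from `F₄` by adding, for each of the six edges
`xᵢyᵢⱼ` between a triangle vertex and an added vertex, a new vertex adjacent to
exactly the two endpoints of that edge (vertices `6,…,11`). -/
def F6 : SimpleGraph (Fin 12) :=
  SimpleGraph.fromEdgeSet
    {s(0, 1), s(1, 2), s(0, 2), s(3, 0), s(3, 1), s(4, 1), s(4, 2), s(5, 0), s(5, 2),
     s(6, 0), s(6, 3), s(7, 1), s(7, 3), s(8, 1), s(8, 4), s(9, 2), s(9, 4),
     s(10, 0), s(10, 5), s(11, 2), s(11, 5)}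

/-- The rigid ladder `RL n`.  For even `n = 2k` it has vertices `u₁,…,u_k,v₁,…,v_k`
and edges `uᵢvᵢ, uᵢuᵢ₊₁, uᵢvᵢ₊₁, vᵢvᵢ₊₁` (for `1 ≤ i ≤ k-1`) together with `u_k v_k`;
for odd `n` it is `RL (n+1)` with the vertex `u_{(n+1)/2}` deleted.  We use the zigzag
labelling `vᵢ ↦ 2i - 2`, `uᵢ ↦ 2i - 1` (under which deleting `u_{(n+1)/2} = n` from
`RL (n+1)` leaves exactly the labels `0,…,n-1`); under this labelling two vertices are
adjacent iff their labels differ by exactly 1 or 2. -/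
def rigidLadder (n : ℕ) : SimpleGraph (Fin n) where
  Adj a b := a ≠ b ∧ Nat.dist a.val b.val ≤ 2
  symm := ⟨by
    rintro a b ⟨h1, h2⟩
    exact ⟨h1.symm, by rwa [Nat.dist_comm]⟩⟩
  loopless := ⟨fun a h => h.1 rfl⟩

private lemma deg_le_of_maxDeg {V : Type*} [Fintype V] {G : SimpleGraph V} {Δ : ℕ}
    (h : G.maxDeg ≤ Δ) (v : V) : G.deg v ≤ Δ :=
  le_trans (Finset.le_sup (Finset.mem_univ v)) h

private lemma not_three {V : Type*} [Finite V] {G : SimpleGraph V} {v a b c : V}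
    (hdeg : G.deg v ≤ 2) (ha : G.Adj v a) (hb : G.Adj v b) (hc : G.Adj v c)
    (hab : a ≠ b) (hac : a ≠ c) (hbc : b ≠ c) : False := by
  have hsub : ({a, b, c} : Set V) ⊆ G.neighborSet v := by
    intro x hx
    simp only [Set.mem_insert_iff, Set.mem_singleton_iff] at hx
    rcases hx with rfl | rfl | rfl <;> assumption
  have h3 : ({a, b, c} : Set V).ncard = 3 :=
    Set.ncard_eq_three.mpr ⟨a, b, c, hab, hac, hbc, rfl⟩
  have hle := Set.ncard_le_ncard hsub (Set.toFinite _)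
  have hdeg' : (G.neighborSet v).ncard ≤ 2 := hdeg
  omega

private lemma no_cross_nat (fv fu1 fu2 fx fy : ℕ)
 (A1 : ¬(fv < fx ∧ fx < fu1 ∧ fu1 < fy)) (A2 : ¬(fv < fy ∧ fy < fu1 ∧ fu1 < fx))
 (A3 : ¬(fu1 < fx ∧ fx < fv ∧ fv < fy)) (A4 : ¬(fu1 < fy ∧ fy < fv ∧ fv < fx))
 (B1 : ¬(fv < fx ∧ fx < fu2 ∧ fu2 < fy)) (B2 : ¬(fv < fy ∧ fy < fu2 ∧ fu2 < fx))
 (B3 : ¬(fu2 < fx ∧ fx < fv ∧ fv < fy)) (B4 : ¬(fu2 < fy ∧ fy < fv ∧ fv < fx))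
 (C1 : ¬(fx < fv ∧ fv < fy ∧ fy < fu1)) (C2 : ¬(fx < fu1 ∧ fu1 < fy ∧ fy < fv))
 (C3 : ¬(fy < fv ∧ fv < fx ∧ fx < fu1)) (C4 : ¬(fy < fu1 ∧ fu1 < fx ∧ fx < fv))
 (D1 : ¬(fx < fv ∧ fv < fy ∧ fy < fu2)) (D2 : ¬(fx < fu2 ∧ fu2 < fy ∧ fy < fv))
 (D3 : ¬(fy < fv ∧ fv < fx ∧ fx < fu2)) (D4 : ¬(fy < fu2 ∧ fu2 < fx ∧ fx < fv))
 (hvx : fv ≠ fx) (hvy : fv ≠ fy)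
 (hc : (fu1 < fx ∧ fx < fu2 ∧ fu2 < fy) ∨ (fx < fu1 ∧ fu1 < fy ∧ fy < fu2)) : False := by
  omega

private lemma no_cross {V : Type*} {G : SimpleGraph V} {f : V → ℕ}
    (hemb : ∀ a b c d : V, G.Adj a b → G.Adj c d →
      ¬(f a < f c ∧ f c < f b ∧ f b < f d))
    {v u1 u2 x y : V} (h1 : G.Adj v u1) (h2 : G.Adj v u2) (hxy : G.Adj x y)
    (hvx : f v ≠ f x) (hvy : f v ≠ f y)
    (hc : (f u1 < f x ∧ f x < f u2 ∧ f u2 < f y) ∨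
          (f x < f u1 ∧ f u1 < f y ∧ f y < f u2)) :
    False :=
  no_cross_nat (f v) (f u1) (f u2) (f x) (f y)
    (hemb v u1 x y h1 hxy) (hemb v u1 y x h1 hxy.symm)
    (hemb u1 v x y h1.symm hxy) (hemb u1 v y x h1.symm hxy.symm)
    (hemb v u2 x y h2 hxy) (hemb v u2 y x h2 hxy.symm)
    (hemb u2 v x y h2.symm hxy) (hemb u2 v y x h2.symm hxy.symm)
    (hemb x y v u1 hxy h1) (hemb x y u1 v hxy h1.symm)
    (hemb y x v u1 hxy.symm h1) (hemb y x u1 v hxy.symm h1.symm)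
    (hemb x y v u2 hxy h2) (hemb x y u2 v hxy h2.symm)
    (hemb y x v u2 hxy.symm h2) (hemb y x u2 v hxy.symm h2.symm)
    hvx hvy hc

private lemma stmt2_aux (Δ k : ℕ)
    (hyp : ∀ (W : Type) [Fintype W] (H : SimpleGraph W), Nonempty W →
      H.IsOuterplanar → H.maxDeg ≤ Δ →
      ∃ v : W, H.deg v ≤ 2 ∧ H.square.deg v ≤ k) :
    ∀ n : ℕ, ∀ (V : Type) (_ : Fintype V) (G : SimpleGraph V), Fintype.card V ≤ n →
      G.IsOuterplanar → G.maxDeg ≤ Δ →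
      ∀ s : Finset V, s.Nonempty → ∃ v ∈ s, G.square.degIn s v ≤ k := by
  intro n
  induction n with
  | zero =>
    intro V _ G hcard _ _ s hs
    obtain ⟨u, _⟩ := hs
    have : 0 < Fintype.card V := Fintype.card_pos_iff.mpr ⟨u⟩
    omega
  | succ n ih =>
    intro V _ G hcard hout hΔ s hs
    classical
    obtain ⟨u0, hu0⟩ := hs
    obtain ⟨v, hv2, hvk⟩ := hyp V G ⟨u0⟩ hout hΔ
    by_cases hvs : v ∈ s
    · refine ⟨v, hvs, ?_⟩
      have hsub : {u | u ∈ s ∧ G.square.Adj v u} ⊆ G.square.neighborSet v :=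
        fun u hu => hu.2
      exact le_trans (Set.ncard_le_ncard hsub (Set.toFinite _)) hvk
    · -- contract the k-vertex v
      obtain ⟨f, finj, hemb⟩ := hout
      let G' : SimpleGraph {u : V // u ≠ v} :=
        { Adj := fun a b => a ≠ b ∧
            (G.Adj ↑a ↑b ∨ (G.Adj ↑a v ∧ G.Adj v ↑b)),
          symm := ⟨by
            rintro a b ⟨hne, h | ⟨p, q⟩⟩
            · exact ⟨hne.symm, Or.inl h.symm⟩
            · exact ⟨hne.symm, Or.inr ⟨q.symm, p.symm⟩⟩⟩,
          loopless := ⟨fun a h => h.1 rfl⟩ }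
      -- outerplanarity of G'
      have hout' : G'.IsOuterplanar := by
        refine ⟨fun a => f ↑a, fun a b h => Subtype.ext (finj h), ?_⟩
        rintro a b c d hab hcd ⟨o1, o2, o3⟩
        have hva : f v ≠ f ↑a := fun h => a.prop (finj h).symm
        have hvb : f v ≠ f ↑b := fun h => b.prop (finj h).symm
        have hvc : f v ≠ f ↑c := fun h => c.prop (finj h).symm
        have hvd : f v ≠ f ↑d := fun h => d.prop (finj h).symm
        rcases hab.2 with hab' | ⟨hab1, hab2⟩ <;>
          rcases hcd.2 with hcd' | ⟨hcd1, hcd2⟩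
        · exact hemb ↑a ↑b ↑c ↑d hab' hcd' ⟨o1, o2, o3⟩
        · exact no_cross hemb hcd1.symm hcd2 hab' hva hvb
            (Or.inr ⟨o1, o2, o3⟩)
        · exact no_cross hemb hab1.symm hab2 hcd' hvc hvd
            (Or.inl ⟨o1, o2, o3⟩)
        · -- both edges are "new": four distinct neighbors of v
          have hac : (↑a : V) ≠ ↑c := fun e => Nat.ne_of_lt o1 (congrArg f e)
          have habn : (↑a : V) ≠ ↑b := fun e => Nat.ne_of_lt (o1.trans o2) (congrArg f e)
          have hcb : (↑c : V) ≠ ↑b := fun e => Nat.ne_of_lt o2 (congrArg f e)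
          exact not_three hv2 hab1.symm hcd1.symm hab2 hac habn hcb
      -- max degree of G'
      have hΔ' : G'.maxDeg ≤ Δ := by
        apply Finset.sup_le
        intro u _
        have hmap : ∀ w ∈ G'.neighborSet u,
            (if G.Adj ↑u ↑w then (↑w : V) else v) ∈ G.neighborSet ↑u := by
          intro w hw
          by_cases hadj : G.Adj ↑u ↑w
          · simp only [hadj, if_true]; exact hadj
          · rcases hw.2 with h | ⟨h, _⟩
            · exact absurd h hadj
            · simpa [hadj] using h
        have hinj : Set.InjOn (fun w : {u : V // u ≠ v} =>
            if G.Adj ↑u ↑w then (↑w : V) else v) (G'.neighborSet u) := by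
          intro w1 hw1 w2 hw2 he
          by_cases h1 : G.Adj ↑u ↑w1 <;> by_cases h2 : G.Adj ↑u ↑w2 <;>
            simp only [h1, h2, if_pos, if_neg, if_true, if_false] at he
          · exact Subtype.ext he
          · exact absurd he w1.prop
          · exact absurd he.symm w2.prop
          · -- both w1, w2 neighbors of v (via new clause), and u too
            by_contra hne
            rcases hw1.2 with h | ⟨huv, hvw1⟩
            · exact h1 h
            rcases hw2.2 with h | ⟨_, hvw2⟩
            · exact h2 h
            have hne' : (↑w1 : V) ≠ ↑w2 := fun e => hne (Subtype.ext e)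
            have huw1 : (↑u : V) ≠ ↑w1 := fun e => hw1.1 (Subtype.ext e)
            have huw2 : (↑u : V) ≠ ↑w2 := fun e => hw2.1 (Subtype.ext e)
            exact not_three hv2 huv.symm hvw1 hvw2 huw1 huw2 hne'
        have := Set.ncard_le_ncard_of_injOn _ hmap hinj (Set.toFinite _)
        exact le_trans this (deg_le_of_maxDeg hΔ ↑u)
      -- cardinality decreases
      have hcard' : Fintype.card {u : V // u ≠ v} ≤ n := by
        have hlt : Fintype.card {u : V // u ≠ v} < Fintype.card V := by
          apply Fintype.card_lt_of_injective_of_notMem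
            (Subtype.val) Subtype.val_injective (b := v)
          rintro ⟨w, hw⟩
          exact w.prop hw
        omega
      -- the subset, transferred
      let s' : Finset {u : V // u ≠ v} := s.subtype (· ≠ v)
      have hs' : s'.Nonempty :=
        ⟨⟨u0, fun e => hvs (e ▸ hu0)⟩, Finset.mem_subtype.mpr hu0⟩
      obtain ⟨w', hw's, hwk⟩ := ih _ (inferInstance) G' hcard' hout' hΔ' s' hs'
      refine ⟨↑w', Finset.mem_subtype.mp hw's, ?_⟩
      -- compare degrees in the squares
      have hsub : {u | u ∈ s ∧ G.square.Adj ↑w' u} ⊆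
          Subtype.val '' {u' | u' ∈ s' ∧ G'.square.Adj w' u'} := by
        rintro u ⟨hus, hne, hadj⟩
        have huv : u ≠ v := fun e => hvs (e ▸ hus)
        refine ⟨⟨u, huv⟩, ⟨Finset.mem_subtype.mpr hus, ?_⟩, rfl⟩
        have hne' : w' ≠ ⟨u, huv⟩ := fun e => hne (congrArg Subtype.val e)
        refine ⟨hne', ?_⟩
        rcases hadj with h | ⟨m, hm1, hm2⟩
        · exact Or.inl ⟨hne', Or.inl h⟩
        · by_cases hmv : m = v
          · exact Or.inl ⟨hne', Or.inr ⟨hmv ▸ hm1, hmv ▸ hm2⟩⟩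
          · refine Or.inr ⟨⟨m, hmv⟩, ⟨fun e => hm1.ne (congrArg Subtype.val e),
              Or.inl hm1⟩, ⟨fun e => hm2.ne (congrArg Subtype.val e), Or.inl hm2⟩⟩
      calc G.square.degIn s ↑w'
          ≤ (Subtype.val '' {u' | u' ∈ s' ∧ G'.square.Adj w' u'}).ncard :=
            Set.ncard_le_ncard hsub (Set.toFinite _)
        _ = {u' | u' ∈ s' ∧ G'.square.Adj w' u'}.ncard :=
            Set.ncard_image_of_injective _ Subtype.val_injective
        _ ≤ k := hwk

/-- Fix `Δ, k`. If every finite nonempty outerplanar graph with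
maximum degree at most `Δ` contains a `k`-vertex (a vertex of degree at most 2 in the
graph and degree at most `k` in its square), then every finite outerplanar graph `G`
with maximum degree at most `Δ` satisfies `ind(G²) ≤ k`: every nonempty induced
subgraph of `G²` has a vertex of degree at most `k` in that subgraph. -/
theorem stmt2 (Δ k : ℕ)
    (hyp : ∀ (W : Type) [Fintype W] (H : SimpleGraph W), Nonempty W →
      H.IsOuterplanar → H.maxDeg ≤ Δ →
      ∃ v : W, H.deg v ≤ 2 ∧ H.square.deg v ≤ k)
    {V : Type} [Fintype V] (G : SimpleGraph V)
    (hout : G.IsOuterplanar) (hΔ : G.maxDeg ≤ Δ) :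
    ∀ s : Finset V, s.Nonempty → ∃ v ∈ s, G.square.degIn s v ≤ k := fun s hs =>
  stmt2_aux Δ k hyp (Fintype.card V) V inferInstance G le_rfl hout hΔ s hs
end

section
/- Let G be a finite outerplanar simple graph with maximum degree Δ = k where k ∈ {3,4}. Then ind(G²) ≤ 2k−2; that is, every nonempty induced subgraph of G² contains a vertex of degree at most 2k−2 in that subgraph. -/
open SimpleGraph

namespace OPAux

open SimpleGraph

variable {V : Type*} [Fintype V]

lemma square_adj (G : SimpleGraph V) {u v : V} :
    G.square.Adj u v ↔ u ≠ v ∧ (G.Adj u v ∨ ∃ w, G.Adj u w ∧ G.Adj w v) := Iff.rfl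

lemma deg_le_of_le {G G' : SimpleGraph V} (h : G' ≤ G) (v : V) : G'.deg v ≤ G.deg v :=
  Set.ncard_le_ncard (fun _ hu => h hu) (Set.toFinite _)

lemma outerplanar_of_le {G G' : SimpleGraph V} (h : G' ≤ G) (ho : G.IsOuterplanar) :
    G'.IsOuterplanar := by
  obtain ⟨f, hinj, hnc⟩ := ho
  exact ⟨f, hinj, fun a b c d hab hcd => hnc a b c d (h hab) (h hcd)⟩

lemma nbd1 (G : SimpleGraph V) {p v : V} (h : G.Adj p v) :
    (G.neighborSet p \ {v}).ncard + 1 = G.deg p :=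
  Set.ncard_diff_singleton_add_one h (Set.toFinite _)

lemma degIn_bound (H : SimpleGraph V) (s : Finset V) (v : V) (T : Set V) (B : ℕ)
    (hsub : ∀ u, u ∈ s → H.Adj v u → u ∈ T) (hB : T.ncard ≤ B) : H.degIn s v ≤ B :=
  le_trans (Set.ncard_le_ncard (fun u hu => hsub u hu.1 hu.2) (Set.toFinite T)) hB

lemma del_square (G : SimpleGraph V) (s : Finset V) {x y : V} (hx : x ∉ s)
    (hcond : y ∈ s → ∀ z ∈ s, G.Adj x z → z ≠ y →
      (G.deleteEdges {s(x,y)}).square.Adj y z) :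
    ∀ v ∈ s, G.square.degIn s v ≤ (G.deleteEdges {s(x,y)}).square.degIn s v := by
  intro v hv
  refine Set.ncard_le_ncard ?_ (Set.toFinite _)
  rintro u ⟨hu, hne, hca⟩
  refine ⟨hu, ?_⟩
  have hvx : v ≠ x := fun h => hx (h ▸ hv)
  have hux : u ≠ x := fun h => hx (h ▸ hu)
  rcases hca with h | ⟨w, h1, h2⟩
  · refine ⟨hne, Or.inl (SimpleGraph.deleteEdges_adj.mpr ⟨h, ?_⟩)⟩
    intro hmem
    rw [Set.mem_singleton_iff, Sym2.eq_iff] at hmem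
    rcases hmem with ⟨h1', _⟩ | ⟨_, h2'⟩
    · exact hvx h1'
    · exact hux h2'
  · by_cases hc1 : s(v, w) = s(x, y)
    · rw [Sym2.eq_iff] at hc1
      rcases hc1 with ⟨hvx', _⟩ | ⟨hvy, hwx⟩
      · exact absurd hvx' hvx
      · subst hwx; subst hvy
        exact hcond hv u hu h2 (Ne.symm hne)
    · by_cases hc2 : s(w, u) = s(x, y)
      · rw [Sym2.eq_iff] at hc2
        rcases hc2 with ⟨hwx, huy⟩ | ⟨_, hux'⟩
        · subst hwx; subst huy
          exact (hcond hu v hv h1.symm hne).symm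
        · exact absurd hux' hux
      · exact ⟨hne, Or.inr ⟨w,
          SimpleGraph.deleteEdges_adj.mpr ⟨h1, fun hm => hc1 (Set.mem_singleton_iff.mp hm)⟩,
          SimpleGraph.deleteEdges_adj.mpr ⟨h2, fun hm => hc2 (Set.mem_singleton_iff.mp hm)⟩⟩⟩

/-- The set of non-isolated vertices lying strictly between `p` and `q` in the
book-embedding order `f`. -/
def IntSet (G : SimpleGraph V) (f : V → ℕ) (p q : V) : Set V :=
  {z | f p < f z ∧ f z < f q ∧ 0 < G.deg z}

lemma key (k : ℕ) (hk : 3 ≤ k) :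
    ∀ n (G : SimpleGraph V), G.edgeSet.ncard = n → (∀ v, G.deg v ≤ k) →
      G.IsOuterplanar → ∀ s : Finset V, s.Nonempty →
      ∃ v ∈ s, G.square.degIn s v ≤ 2 * k - 2 := by
  intro n
  induction n using Nat.strong_induction_on with
  | _ n ih =>
  intro G hn hdeg hout s hs
  classical
  have HDEL : ∀ x y : V, G.Adj x y → x ∉ s →
      (y ∈ s → ∀ z ∈ s, G.Adj x z → z ≠ y → (G.deleteEdges {s(x,y)}).square.Adj y z) →
      ∃ v ∈ s, G.square.degIn s v ≤ 2 * k - 2 := by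
    intro x y hxy hxs hcond
    have hE : s(x,y) ∈ G.edgeSet := G.mem_edgeSet.mpr hxy
    have hlt : (G.deleteEdges {s(x,y)}).edgeSet.ncard < n := by
      have h1 : (G.edgeSet \ {s(x,y)}).ncard + 1 = G.edgeSet.ncard :=
        Set.ncard_diff_singleton_add_one hE (Set.toFinite _)
      rw [SimpleGraph.edgeSet_deleteEdges]
      omega
    obtain ⟨v, hv, hdv⟩ := ih _ hlt (G.deleteEdges {s(x,y)}) rfl
      (fun v => le_trans (deg_le_of_le (SimpleGraph.deleteEdges_le _) v) (hdeg v))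
      (outerplanar_of_le (SimpleGraph.deleteEdges_le _) hout) s hs
    exact ⟨v, hv, le_trans (del_square G s hxs hcond v hv) hdv⟩
  by_cases hA : ∃ v ∈ s, G.deg v ≤ 1
  · obtain ⟨v, hv, hd⟩ := hA
    refine ⟨v, hv, ?_⟩
    rcases Nat.lt_or_ge (G.deg v) 1 with h0 | h1
    · have hNv : G.neighborSet v = ∅ := by
        have h0' : (G.neighborSet v).ncard = 0 := by
          have hdd : G.deg v = (G.neighborSet v).ncard := rfl
          omega
        exact (Set.ncard_eq_zero (Set.toFinite _)).mp h0'
      refine degIn_bound _ s v ∅ _ ?_ (by simp)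
      intro u hu hadj
      rw [square_adj] at hadj
      rcases hadj.2 with h | ⟨w, h1, _⟩
      · exact absurd (show u ∈ G.neighborSet v from h) (by simp [hNv])
      · exact absurd (show w ∈ G.neighborSet v from h1) (by simp [hNv])
    · have hd1 : G.deg v = 1 := le_antisymm hd h1
      obtain ⟨y, hy⟩ := Set.ncard_eq_one.mp hd1
      have hvy : G.Adj v y := by
        have : y ∈ G.neighborSet v := by rw [hy]; exact rfl
        exact this
      refine degIn_bound _ s v (insert y (G.neighborSet y \ {v})) (2*k-2) ?_ ?_
      · intro u hu hadj
        rw [square_adj] at hadj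
        obtain ⟨hne, hca⟩ := hadj
        rcases hca with h | ⟨w, h1, h2⟩
        · have hm : u ∈ G.neighborSet v := h
          rw [hy] at hm
          exact hm ▸ Set.mem_insert _ _
        · have hw : w ∈ G.neighborSet v := h1
          rw [hy] at hw
          have hw' : w = y := hw
          subst hw'
          exact Set.mem_insert_of_mem _ ⟨h2, fun hh => hne (Set.mem_singleton_iff.mp hh).symm⟩
      · have h2 := nbd1 G hvy.symm
        have h3 := Set.ncard_insert_le y (G.neighborSet y \ {v})
        have h4 := hdeg y
        omega
  push_neg at hA
  by_cases hA' : ∃ x, G.deg x = 1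
  · obtain ⟨x, hdx⟩ := hA'
    have hxs : x ∉ s := fun h => by have := hA x h; omega
    obtain ⟨y, hy⟩ := Set.ncard_eq_one.mp hdx
    have hxy : G.Adj x y := by
      have : y ∈ G.neighborSet x := by rw [hy]; exact rfl
      exact this
    refine HDEL x y hxy hxs ?_
    intro _ z hz hadj hzy
    have hm : z ∈ G.neighborSet x := hadj
    rw [hy] at hm
    exact absurd (Set.mem_singleton_iff.mp hm) hzy
  push_neg at hA'
  obtain ⟨f, hinj, hnc⟩ := hout
  obtain ⟨v0, hv0⟩ := hs
  have hposdeg : ∀ y z : V, G.Adj y z → 0 < G.deg z :=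
    fun y z h => (Set.ncard_pos (Set.toFinite _)).mpr ⟨y, h.symm⟩
  set NI : Finset V := Finset.univ.filter (fun v => 0 < G.deg v) with hNI
  have hv0NI : v0 ∈ NI := by
    simp only [hNI, Finset.mem_filter, Finset.mem_univ, true_and]
    have := hA v0 hv0; omega
  obtain ⟨t, htNI, htmax⟩ := NI.exists_max_image f ⟨v0, hv0NI⟩
  have htpos : 0 < G.deg t := by
    simpa only [hNI, Finset.mem_filter, Finset.mem_univ, true_and] using htNI
  have htdeg : 2 ≤ G.deg t := by have := hA' t; omega
  have hnbmax : ∀ y, G.Adj t y → f y < f t := by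
    intro y hy
    have hyNI : y ∈ NI := by
      simp only [hNI, Finset.mem_filter, Finset.mem_univ, true_and]
      exact hposdeg t y hy
    have hle := htmax y hyNI
    have hne : y ≠ t := hy.ne'
    exact lt_of_le_of_ne hle (fun h => hne (hinj h))
  obtain ⟨p, hp, q, hq, hpq⟩ := (Set.one_lt_ncard (Set.toFinite _)).mp htdeg
  have hpt : G.Adj t p := hp
  have hqt : G.Adj t q := hq
  have hT0 : ∃ e : V × V, G.Adj e.1 e.2 ∧ (IntSet G f e.1 e.2).Nonempty := by
    rcases lt_trichotomy (f p) (f q) with h | h | h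
    · exact ⟨(p, t), hpt.symm, ⟨q, h, hnbmax q hqt, hposdeg t q hqt⟩⟩
    · exact absurd (hinj h) hpq
    · exact ⟨(q, t), hqt.symm, ⟨p, h, hnbmax p hpt, hposdeg t p hpt⟩⟩
  set T : Finset (V × V) := Finset.univ.filter
      (fun e => G.Adj e.1 e.2 ∧ (IntSet G f e.1 e.2).Nonempty) with hT
  have hTne : T.Nonempty := by
    obtain ⟨e, he1, he2⟩ := hT0
    exact ⟨e, by simp only [hT, Finset.mem_filter, Finset.mem_univ, true_and]; exact ⟨he1, he2⟩⟩
  obtain ⟨e0, he0, hmin0⟩ := T.exists_min_image (fun e => (IntSet G f e.1 e.2).ncard) hTne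
  rw [hT, Finset.mem_filter] at he0
  obtain ⟨-, hab, hIne⟩ := he0
  set a := e0.1 with ha
  set b := e0.2 with hb
  set I : Set V := IntSet G f a b with hI
  have hmin : ∀ p' q' : V, G.Adj p' q' → (IntSet G f p' q').Nonempty →
      I.ncard ≤ (IntSet G f p' q').ncard := by
    intro p' q' h1 h2
    exact hmin0 (p', q') (by simp only [hT, Finset.mem_filter, Finset.mem_univ, true_and]; exact ⟨h1, h2⟩)
  have hIlt : ∀ x ∈ I, f a < f x ∧ f x < f b ∧ 0 < G.deg x := fun x hx => hx
  have hconf : ∀ x ∈ I, ∀ y, G.Adj x y → f a ≤ f y ∧ f y ≤ f b := by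
    intro x hx y hxy
    obtain ⟨h1, h2, -⟩ := hIlt x hx
    constructor
    · by_contra h; push_neg at h
      exact hnc y x a b hxy.symm hab ⟨h, h1, h2⟩
    · by_contra h; push_neg at h
      exact hnc a b x y hab hxy ⟨h1, h2, h⟩
  have hconf' : ∀ x ∈ I, ∀ y, G.Adj x y → y = a ∨ y = b ∨ y ∈ I := by
    intro x hx y hxy
    obtain ⟨hya, hyb⟩ := hconf x hx y hxy
    rcases eq_or_lt_of_le hya with h | h
    · exact Or.inl (hinj h).symm
    rcases eq_or_lt_of_le hyb with h2 | h2
    · exact Or.inr (Or.inl (hinj h2))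
    · exact Or.inr (Or.inr ⟨h, h2, hposdeg x y hxy⟩)
  have hMINE : ∀ p' q' : V, G.Adj p' q' → f a ≤ f p' → f q' ≤ f b →
      ∀ w ∈ I, w ∉ IntSet G f p' q' → IntSet G f p' q' = ∅ := by
    intro p' q' hpq' hfp hfq w hw hwn
    by_contra hne0
    have h2 : (IntSet G f p' q').Nonempty := Set.nonempty_iff_ne_empty.mpr hne0
    have hsub : IntSet G f p' q' ⊆ I \ {w} := by
      intro z hz
      obtain ⟨hz1, hz2, hz3⟩ := hz
      refine ⟨⟨lt_of_le_of_lt hfp hz1, lt_of_lt_of_le hz2 hfq, hz3⟩, ?_⟩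
      simp only [Set.mem_singleton_iff]
      rintro rfl
      exact hwn ⟨hz1, hz2, hz3⟩
    have hle := Set.ncard_le_ncard hsub (Set.toFinite _)
    have h3 := Set.ncard_diff_singleton_add_one hw (Set.toFinite I)
    have h4 := hmin p' q' hpq' h2
    omega
  have hIedge : ∀ x y, x ∈ I → G.Adj x y → f x < f y → f y ≤ f b →
      ∀ z ∈ I, ¬(f x < f z ∧ f z < f y) := by
    intro x y hx hxy hlt hyb z hz hcon
    have h0 := hMINE x y hxy (le_of_lt (hIlt x hx).1) hyb x hx (fun hc => lt_irrefl _ hc.1)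
    exact absurd (show z ∈ IntSet G f x y from ⟨hcon.1, hcon.2, (hIlt z hz).2.2⟩)
      (by rw [h0]; exact Set.notMem_empty z)
  have hAedge : ∀ y ∈ I, G.Adj a y → ∀ z ∈ I, ¬ f z < f y := by
    intro y hy hay z hz hzy
    have h0 := hMINE a y hay le_rfl (le_of_lt (hIlt y hy).2.1) y hy (fun hc => lt_irrefl _ hc.2.1)
    exact absurd (show z ∈ IntSet G f a y from ⟨(hIlt z hz).1, hzy, (hIlt z hz).2.2⟩)
      (by rw [h0]; exact Set.notMem_empty z)
  have hBedge : ∀ y ∈ I, G.Adj y b → ∀ z ∈ I, ¬ f y < f z := by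
    intro y hy hyb z hz hyz
    have h0 := hMINE y b hyb (le_of_lt (hIlt y hy).1) le_rfl y hy (fun hc => lt_irrefl _ hc.1)
    exact absurd (show z ∈ IntSet G f y b from ⟨hyz, (hIlt z hz).2.1, (hIlt z hz).2.2⟩)
      (by rw [h0]; exact Set.notMem_empty z)
  obtain ⟨x1, hx1I, hx1min⟩ := Set.exists_min_image I f (Set.toFinite I) hIne
  have hdegI : ∀ x ∈ I, 2 ≤ G.deg x := by
    intro x hx
    have h1 := hA' x
    have h2 := (hIlt x hx).2.2
    omega
  have two_nbrs : ∀ x ∈ I, ∃ y z, G.Adj x y ∧ G.Adj x z ∧ y ≠ z := by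
    intro x hx
    obtain ⟨y, hy, z, hz, hyz⟩ := (Set.one_lt_ncard (Set.toFinite _)).mp (hdegI x hx)
    exact ⟨y, z, hy, hz, hyz⟩
  have pair_force : ∀ x ∈ I, ∀ p' q' : V, p' ≠ q' → (∀ y, G.Adj x y → y = p' ∨ y = q') →
      G.Adj x p' ∧ G.Adj x q' := by
    intro x hx p' q' hpq' hsub
    obtain ⟨y, z, hy, hz, hyz⟩ := two_nbrs x hx
    rcases hsub y hy with rfl | rfl <;> rcases hsub z hz with rfl | rfl
    · exact absurd rfl hyz
    · exact ⟨hy, hz⟩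
    · exact ⟨hz, hy⟩
    · exact absurd rfl hyz
  have hfax1 : f a < f x1 := (hIlt x1 hx1I).1
  have hfx1b : f x1 < f b := (hIlt x1 hx1I).2.1
  have hfab : f a < f b := lt_trans hfax1 hfx1b
  have hab' : a ≠ b := fun h => by rw [h] at hfab; exact lt_irrefl _ hfab
  have hax1 : a ≠ x1 := fun h => by rw [h] at hfax1; exact lt_irrefl _ hfax1
  have hx1b : x1 ≠ b := fun h => by rw [h] at hfx1b; exact lt_irrefl _ hfx1b
  by_cases hm1 : I \ {x1} = ∅
  · -- |I| = 1 : triangle a x1 b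
    have hIeq : I = {x1} := by
      apply Set.Subset.antisymm
      · intro z hz
        by_contra hzz
        exact absurd (show z ∈ I \ {x1} from ⟨hz, hzz⟩) (by rw [hm1]; exact Set.notMem_empty z)
      · simpa using hx1I
    have hNx1 : ∀ y, G.Adj x1 y → y = a ∨ y = b := by
      intro y hy
      rcases hconf' x1 hx1I y hy with h | h | h
      · exact Or.inl h
      · exact Or.inr h
      · rw [hIeq] at h
        exact absurd (Set.mem_singleton_iff.mp h) hy.ne'
    obtain ⟨hx1a, hx1bb⟩ := pair_force x1 hx1I a b hab' hNx1
    by_cases hx1s : x1 ∈ s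
    · refine ⟨x1, hx1s, ?_⟩
      refine degIn_bound _ s x1
        (({a, b} : Set V) ∪ ((G.neighborSet a \ {x1}) \ {b}) ∪ ((G.neighborSet b \ {x1}) \ {a}))
        (2*k-2) ?_ ?_
      · intro u hu hadj
        rw [square_adj] at hadj
        obtain ⟨hne, hca⟩ := hadj
        rcases hca with h | ⟨w, h1, h2⟩
        · rcases hNx1 u h with rfl | rfl
          · exact Or.inl (Or.inl (by simp))
          · exact Or.inl (Or.inl (by simp))
        · rcases hNx1 w h1 with rfl | rfl
          · by_cases hub : u = b
            · exact Or.inl (Or.inl (by simp [hub]))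
            · exact Or.inl (Or.inr ⟨⟨h2, by simpa using (Ne.symm hne)⟩, by simpa using hub⟩)
          · by_cases hua : u = a
            · exact Or.inl (Or.inl (by simp [hua]))
            · exact Or.inr ⟨⟨h2, by simpa using (Ne.symm hne)⟩, by simpa using hua⟩
      · have c1 : ({a, b} : Set V).ncard ≤ 2 :=
          le_trans (Set.ncard_insert_le _ _) (by simp)
        have c2 := nbd1 G hx1a.symm
        have hbm : b ∈ G.neighborSet a \ {x1} := ⟨hab, fun h => hx1b (Set.mem_singleton_iff.mp h).symm⟩
        have c3 := Set.ncard_diff_singleton_add_one hbm (Set.toFinite _)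
        have c4 := nbd1 G hx1bb.symm
        have ham : a ∈ G.neighborSet b \ {x1} := ⟨hab.symm, fun h => hax1 (Set.mem_singleton_iff.mp h)⟩
        have c5 := Set.ncard_diff_singleton_add_one ham (Set.toFinite _)
        have u1 := Set.ncard_union_le (({a, b} : Set V) ∪ ((G.neighborSet a \ {x1}) \ {b}))
          ((G.neighborSet b \ {x1}) \ {a})
        have u2 := Set.ncard_union_le ({a, b} : Set V) ((G.neighborSet a \ {x1}) \ {b})
        have hda := hdeg a
        have hdb := hdeg b
        omega
    · refine HDEL x1 a hx1a hx1s ?_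
      intro _ z hz hadj hza
      rcases hNx1 z hadj with rfl | rfl
      · exact absurd rfl hza
      · refine ⟨hab', Or.inl (SimpleGraph.deleteEdges_adj.mpr ⟨hab, ?_⟩)⟩
        intro hm
        rw [Set.mem_singleton_iff, Sym2.eq_iff] at hm
        rcases hm with ⟨h1', _⟩ | ⟨_, h2'⟩
        · exact hax1 h1'
        · exact hx1b h2'.symm
  · -- |I| ≥ 2
    obtain ⟨x2, hx2m, hx2min⟩ := Set.exists_min_image (I \ {x1}) f (Set.toFinite _)
      (Set.nonempty_iff_ne_empty.mpr hm1)
    obtain ⟨hx2I, hx2ne⟩ := hx2m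
    have hx2ne' : x2 ≠ x1 := by simpa using hx2ne
    have hfx12 : f x1 < f x2 :=
      lt_of_le_of_ne (hx1min x2 hx2I) (fun h => hx2ne' (hinj h).symm)
    have hNx1 : ∀ y, G.Adj x1 y → y = a ∨ y = x2 := by
      intro y hy
      rcases hconf' x1 hx1I y hy with h | h | h
      · exact Or.inl h
      · subst h
        exact absurd hfx12 (by have := hBedge x1 hx1I hy x2 hx2I; omega)
      · by_cases hyx2 : y = x2
        · exact Or.inr hyx2
        · have hy1 : y ≠ x1 := hy.ne'
          have h1 : f x2 ≤ f y := hx2min y ⟨h, by simpa using hy1⟩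
          have h2 : f x2 < f y := lt_of_le_of_ne h1 (fun hh => hyx2 (hinj hh).symm)
          have h3 : f x1 < f y := lt_trans hfx12 h2
          exact absurd ⟨hfx12, h2⟩ (hIedge x1 y hx1I hy h3 (le_of_lt (hIlt y h).2.1) x2 hx2I)
    have hax2 : a ≠ x2 := fun h => by
      have := (hIlt x2 hx2I).1; rw [h] at this; exact lt_irrefl _ this
    obtain ⟨hx1a, hx1x2⟩ := pair_force x1 hx1I a x2 (fun h => hax2 h) hNx1
    by_cases hm2 : (I \ {x1}) \ {x2} = ∅
    · -- |I| = 2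
      have hIeq : I = {x1, x2} := by
        apply Set.Subset.antisymm
        · intro z hz
          by_cases hz1 : z = x1
          · exact Or.inl hz1
          by_cases hz2 : z = x2
          · exact Or.inr hz2
          · exact absurd (show z ∈ (I \ {x1}) \ {x2} from
              ⟨⟨hz, by simpa using hz1⟩, by simpa using hz2⟩)
              (by rw [hm2]; exact Set.notMem_empty z)
        · intro z hz
          rcases hz with rfl | hz
          · exact hx1I
          · exact (Set.mem_singleton_iff.mp hz) ▸ hx2I
      have hfx2b : f x2 < f b := (hIlt x2 hx2I).2.1
      have hx2b : x2 ≠ b := fun h => by rw [h] at hfx2b; exact lt_irrefl _ hfx2b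
      have hNx2 : ∀ y, G.Adj x2 y → y = x1 ∨ y = b := by
        intro y hy
        rcases hconf' x2 hx2I y hy with h | h | h
        · subst h
          exact absurd hfx12 (by have := hAedge x2 hx2I hy.symm x1 hx1I; omega)
        · exact Or.inr h
        · rw [hIeq] at h
          rcases h with h | h
          · exact Or.inl h
          · exact absurd (Set.mem_singleton_iff.mp h) hy.ne'
      have hx1b' : x1 ≠ b := hx1b
      obtain ⟨hx2x1, hx2bb⟩ := pair_force x2 hx2I x1 b hx1b' hNx2
      by_cases hx1s : x1 ∈ s
      · refine ⟨x1, hx1s, ?_⟩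
        refine degIn_bound _ s x1 (insert a (insert x2 (G.neighborSet a \ {x1}))) (2*k-2) ?_ ?_
        · intro u hu hadj
          rw [square_adj] at hadj
          obtain ⟨hne, hca⟩ := hadj
          rcases hca with h | ⟨w, h1, h2⟩
          · rcases hNx1 u h with rfl | rfl
            · exact Set.mem_insert _ _
            · exact Set.mem_insert_of_mem _ (Set.mem_insert _ _)
          · rcases hNx1 w h1 with rfl | rfl
            · exact Set.mem_insert_of_mem _ (Set.mem_insert_of_mem _
                ⟨h2, fun hh => hne (Set.mem_singleton_iff.mp hh).symm⟩)
            · rcases hNx2 u h2 with rfl | rfl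
              · exact absurd rfl (Ne.symm hne)
              · exact Set.mem_insert_of_mem _ (Set.mem_insert_of_mem _
                  ⟨hab, fun hh => hx1b (Set.mem_singleton_iff.mp hh).symm⟩)
        · have c2 := nbd1 G hx1a.symm
          have i1 := Set.ncard_insert_le a (insert x2 (G.neighborSet a \ {x1}))
          have i2 := Set.ncard_insert_le x2 (G.neighborSet a \ {x1})
          have hda := hdeg a
          omega
      · by_cases hx2s : x2 ∈ s
        · refine ⟨x2, hx2s, ?_⟩
          refine degIn_bound _ s x2 (insert b (insert x1 (G.neighborSet b \ {x2}))) (2*k-2) ?_ ?_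
          · intro u hu hadj
            rw [square_adj] at hadj
            obtain ⟨hne, hca⟩ := hadj
            rcases hca with h | ⟨w, h1, h2⟩
            · rcases hNx2 u h with rfl | rfl
              · exact Set.mem_insert_of_mem _ (Set.mem_insert _ _)
              · exact Set.mem_insert _ _
            · rcases hNx2 w h1 with rfl | rfl
              · rcases hNx1 u h2 with rfl | rfl
                · exact Set.mem_insert_of_mem _ (Set.mem_insert_of_mem _
                    ⟨hab.symm, fun hh => hax2 (Set.mem_singleton_iff.mp hh)⟩)
                · exact absurd rfl (Ne.symm hne)
              · exact Set.mem_insert_of_mem _ (Set.mem_insert_of_mem _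
                  ⟨h2, fun hh => hne (Set.mem_singleton_iff.mp hh).symm⟩)
          · have c2 := nbd1 G hx2bb.symm
            have i1 := Set.ncard_insert_le b (insert x1 (G.neighborSet b \ {x2}))
            have i2 := Set.ncard_insert_le x1 (G.neighborSet b \ {x2})
            have hdb := hdeg b
            omega
        · refine HDEL x1 x2 hx1x2 hx1s ?_
          intro hx2s'
          exact absurd hx2s' hx2s
    · -- |I| ≥ 3
      obtain ⟨x3, hx3m, hx3min⟩ := Set.exists_min_image ((I \ {x1}) \ {x2}) f (Set.toFinite _)
        (Set.nonempty_iff_ne_empty.mpr hm2)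
      obtain ⟨⟨hx3I, hx3ne1⟩, hx3ne2⟩ := hx3m
      have hx3ne1' : x3 ≠ x1 := by simpa using hx3ne1
      have hx3ne2' : x3 ≠ x2 := by simpa using hx3ne2
      have hfx23 : f x2 < f x3 :=
        lt_of_le_of_ne (hx2min x3 ⟨hx3I, hx3ne1⟩) (fun h => hx3ne2' (hinj h).symm)
      have hfx13 : f x1 < f x3 := lt_trans hfx12 hfx23
      have hNx2 : ∀ y, G.Adj x2 y → y = x1 ∨ y = x3 := by
        intro y hy
        rcases hconf' x2 hx2I y hy with h | h | h
        · subst h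
          exact absurd hfx12 (by have := hAedge x2 hx2I hy.symm x1 hx1I; omega)
        · subst h
          exact absurd hfx23 (by have := hBedge x2 hx2I hy x3 hx3I; omega)
        · by_cases hyx3 : y = x3
          · exact Or.inr hyx3
          by_cases hyx1 : y = x1
          · exact Or.inl hyx1
          · have hy2 : y ≠ x2 := hy.ne'
            have hyg : f x3 ≤ f y := hx3min y ⟨⟨h, by simpa using hyx1⟩, by simpa using hy2⟩
            have hyg' : f x3 < f y := lt_of_le_of_ne hyg (fun hh => hyx3 (hinj hh).symm)
            have h2 : f x2 < f y := lt_trans hfx23 hyg'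
            exact absurd ⟨hfx23, hyg'⟩ (hIedge x2 y hx2I hy h2 (le_of_lt (hIlt y h).2.1) x3 hx3I)
      have hx1x3 : x1 ≠ x3 := fun h => hx3ne1' h.symm
      obtain ⟨hx2x1, hx2x3⟩ := pair_force x2 hx2I x1 x3 hx1x3 hNx2
      have hax3 : a ≠ x3 := fun h => by
        have := (hIlt x3 hx3I).1; rw [h] at this; exact lt_irrefl _ this
      have hx3not : ∀ y, G.Adj x3 y → y ≠ x2 → (y = b ∨ (y ∈ I ∧ f x3 < f y)) := by
        intro y hy hyne
        rcases hconf' x3 hx3I y hy with h | h | h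
        · subst h
          exact absurd hfx13 (by have := hAedge x3 hx3I hy.symm x1 hx1I; omega)
        · exact Or.inl h
        · rcases lt_trichotomy (f y) (f x3) with hlt | heq | hgt
          · by_cases hyx1 : y = x1
            · subst hyx1
              rcases hNx1 x3 hy.symm with h3 | h3
              · exact absurd h3.symm hax3
              · exact absurd h3 hx3ne2'
            · have : f x3 ≤ f y := hx3min y ⟨⟨h, by simpa using hyx1⟩,
                by simpa using (show y ≠ x2 from hyne)⟩
              omega
          · exact absurd (hinj heq) hy.ne'
          · exact Or.inr ⟨h, hgt⟩
      have hx3uniq : ∀ y y', G.Adj x3 y → y ≠ x2 → G.Adj x3 y' → y' ≠ x2 → y = y' := by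
        intro y y' hy hyn hy' hyn'
        rcases hx3not y hy hyn with rfl | ⟨hyI, hylt⟩
        · rcases hx3not y' hy' hyn' with rfl | ⟨hy'I, hy'lt⟩
          · rfl
          · exact absurd hy'lt (by have := hBedge x3 hx3I hy y' hy'I; omega)
        · rcases hx3not y' hy' hyn' with rfl | ⟨hy'I, hy'lt⟩
          · exact absurd hylt (by have := hBedge x3 hx3I hy' y hyI; omega)
          · rcases lt_trichotomy (f y) (f y') with hlt | heq | hgt
            · exact absurd ⟨hylt, hlt⟩
                (hIedge x3 y' hx3I hy' hy'lt (le_of_lt (hIlt y' hy'I).2.1) y hyI)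
            · exact hinj heq
            · exact absurd ⟨hy'lt, hgt⟩
                (hIedge x3 y hx3I hy hylt (le_of_lt (hIlt y hyI).2.1) y' hy'I)
      obtain ⟨w3, hw3adj, hw3ne⟩ : ∃ w3, G.Adj x3 w3 ∧ w3 ≠ x2 := by
        obtain ⟨y, z, hy, hz, hyz⟩ := two_nbrs x3 hx3I
        by_cases hyx2 : y = x2
        · exact ⟨z, hz, fun h => hyz (hyx2.trans h.symm)⟩
        · exact ⟨y, hy, hyx2⟩
      have hNx3 : ∀ y, G.Adj x3 y → y = x2 ∨ y = w3 := by
        intro y hy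
        by_cases h : y = x2
        · exact Or.inl h
        · exact Or.inr (hx3uniq y w3 hy h hw3adj hw3ne)
      by_cases hx2s : x2 ∈ s
      · refine ⟨x2, hx2s, ?_⟩
        refine degIn_bound _ s x2 ({x1, x3, a, w3} : Set V) (2*k-2) ?_ ?_
        · intro u hu hadj
          rw [square_adj] at hadj
          obtain ⟨hne, hca⟩ := hadj
          rcases hca with h | ⟨w, h1, h2⟩
          · rcases hNx2 u h with rfl | rfl
            · simp
            · simp
          · rcases hNx2 w h1 with rfl | rfl
            · rcases hNx1 u h2 with rfl | rfl
              · simp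
              · exact absurd rfl (Ne.symm hne)
            · rcases hNx3 u h2 with rfl | rfl
              · exact absurd rfl (Ne.symm hne)
              · simp
        · have i1 : ({x1, x3, a, w3} : Set V).ncard ≤ 4 := by
            refine le_trans (Set.ncard_insert_le _ _) ?_
            have i2 := Set.ncard_insert_le x3 ({a, w3} : Set V)
            have i3 := Set.ncard_insert_le a ({w3} : Set V)
            have i4 : ({w3} : Set V).ncard = 1 := Set.ncard_singleton _
            omega
          omega
      · by_cases hx1s : x1 ∈ s
        · refine ⟨x1, hx1s, ?_⟩
          refine degIn_bound _ s x1 (insert a (insert x3 (G.neighborSet a \ {x1}))) (2*k-2) ?_ ?_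
          · intro u hu hadj
            rw [square_adj] at hadj
            obtain ⟨hne, hca⟩ := hadj
            rcases hca with h | ⟨w, h1, h2⟩
            · rcases hNx1 u h with rfl | rfl
              · exact Set.mem_insert _ _
              · exact absurd hu hx2s
            · rcases hNx1 w h1 with rfl | rfl
              · exact Set.mem_insert_of_mem _ (Set.mem_insert_of_mem _
                  ⟨h2, fun hh => hne (Set.mem_singleton_iff.mp hh).symm⟩)
              · rcases hNx2 u h2 with rfl | rfl
                · exact absurd rfl (Ne.symm hne)
                · exact Set.mem_insert_of_mem _ (Set.mem_insert _ _)
          · have c2 := nbd1 G hx1a.symm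
            have i1 := Set.ncard_insert_le a (insert x3 (G.neighborSet a \ {x1}))
            have i2 := Set.ncard_insert_le x3 (G.neighborSet a \ {x1})
            have hda := hdeg a
            omega
        · by_cases hx3s : x3 ∈ s
          · refine ⟨x3, hx3s, ?_⟩
            refine degIn_bound _ s x3 (insert x1 (insert w3 (G.neighborSet w3 \ {x3}))) (2*k-2) ?_ ?_
            · intro u hu hadj
              rw [square_adj] at hadj
              obtain ⟨hne, hca⟩ := hadj
              rcases hca with h | ⟨w, h1, h2⟩
              · rcases hNx3 u h with rfl | rfl
                · exact absurd hu hx2s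
                · exact Set.mem_insert_of_mem _ (Set.mem_insert _ _)
              · rcases hNx3 w h1 with rfl | rfl
                · rcases hNx2 u h2 with rfl | rfl
                  · exact Set.mem_insert _ _
                  · exact absurd rfl (Ne.symm hne)
                · exact Set.mem_insert_of_mem _ (Set.mem_insert_of_mem _
                    ⟨h2, fun hh => hne (Set.mem_singleton_iff.mp hh).symm⟩)
            · have c2 := nbd1 G hw3adj.symm
              have i1 := Set.ncard_insert_le x1 (insert w3 (G.neighborSet w3 \ {x3}))
              have i2 := Set.ncard_insert_le w3 (G.neighborSet w3 \ {x3})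
              have hdw := hdeg w3
              omega
          · refine HDEL x1 x2 hx1x2 hx1s ?_
            intro hx2s'
            exact absurd hx2s' hx2s

end OPAux

/-- For a finite outerplanar graph `G` with maximum degree `Δ = k`,
`k ∈ {3,4}`, we have `ind(G²) ≤ 2k - 2`: every nonempty induced subgraph of `G²`
contains a vertex of degree at most `2k - 2` in that subgraph. -/
theorem stmt3 {V : Type*} [Fintype V] (G : SimpleGraph V) (k : ℕ)
    (hk : k = 3 ∨ k = 4) (hout : G.IsOuterplanar) (hΔ : G.maxDeg = k) :
    ∀ s : Finset V, s.Nonempty → ∃ v ∈ s, G.square.degIn s v ≤ 2 * k - 2 := by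
  intro s hs
  have hk3 : 3 ≤ k := by rcases hk with h | h <;> omega
  have hdeg : ∀ v, G.deg v ≤ k := by
    intro v
    rw [← hΔ]
    exact Finset.le_sup (Finset.mem_univ v)
  exact OPAux.key k hk3 _ G rfl hdeg hout s hs
end

section
/- Every finite biconnected outerplanar simple graph has at least two vertices of degree 2. -/
open SimpleGraph

set_option linter.unusedSectionVars false

section Aux
variable {V : Type*} [Fintype V] {G : SimpleGraph V} {f : V → ℕ}

lemma aux_cut_edge (hconn : G.Connected) {S : Set V} {a b : V} (ha : a ∈ S) (hb : b ∉ S) :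
    ∃ u w, u ∈ S ∧ w ∉ S ∧ G.Adj u w := by
  obtain ⟨p⟩ := hconn.preconnected a b
  obtain ⟨d, _, h1, h2⟩ := p.exists_boundary_dart S ha hb
  exact ⟨d.fst, d.snd, h1, h2, d.adj⟩

lemma aux_cut_edge2 (hbic : ∀ v : V, (G.induce {u | u ≠ v}).Connected)
    {v : V} {S : Set V} {a b : V} (hvS : v ∉ S) (ha : a ∈ S) (hb : b ∉ S) (hbv : b ≠ v) :
    ∃ u w, u ∈ S ∧ w ∉ S ∧ w ≠ v ∧ G.Adj u w := by
  have hav : a ≠ v := fun h => hvS (h ▸ ha)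
  obtain ⟨p⟩ := (hbic v).preconnected ⟨a, hav⟩ ⟨b, hbv⟩
  let p' := p.map (SimpleGraph.Embedding.induce {u | u ≠ v}).toHom
  obtain ⟨d, hd, h1, h2⟩ := p'.exists_boundary_dart S ha hb
  have hsupp : d.snd ∈ p'.support := SimpleGraph.Walk.dart_snd_mem_support_of_mem_darts _ hd
  rw [SimpleGraph.Walk.support_map] at hsupp
  obtain ⟨z, hz, hzz⟩ := List.mem_map.mp hsupp
  exact ⟨d.fst, d.snd, h1, h2, hzz ▸ z.2, d.adj⟩

lemma aux_adj_of_cover (hinj : Function.Injective f)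
    (hnc : ∀ a b c d : V, G.Adj a b → G.Adj c d → ¬(f a < f c ∧ f c < f b ∧ f b < f d))
    (hconn : G.Connected) (hbic : ∀ v : V, (G.induce {u | u ≠ v}).Connected)
    {a b : V} (hab : f a < f b) (hemp : ∀ z, ¬(f a < f z ∧ f z < f b)) : G.Adj a b := by
  classical
  by_contra hnadj
  -- a crossing edge exists
  obtain ⟨u0, w0, hu0, hw0, hadj0⟩ := aux_cut_edge hconn (S := {z | f z ≤ f a})
    (a := a) (b := b) (le_refl (f a)) (fun h => absurd hab (not_lt.mpr h))
  -- choose innermost crossing edge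
  let U : Finset V := Finset.univ.filter (fun u => f u ≤ f a ∧ ∃ w, G.Adj u w ∧ f a < f w)
  have hU0 : u0 ∈ U := by
    simp only [U, Finset.mem_filter, Finset.mem_univ, true_and]
    exact ⟨hu0, w0, hadj0, not_le.mp hw0⟩
  obtain ⟨u, huU, humax⟩ := Finset.exists_max_image U f ⟨u0, hU0⟩
  simp only [U, Finset.mem_filter, Finset.mem_univ, true_and] at huU
  obtain ⟨hu1, w1, hw1adj, hw1⟩ := huU
  have humax' : ∀ u' w', G.Adj u' w' → f u' ≤ f a → f a < f w' → f u' ≤ f u := by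
    intro u' w' h1 h2 h3
    exact humax u' (by simp only [U, Finset.mem_filter, Finset.mem_univ, true_and]; exact ⟨h2, w', h1, h3⟩)
  let W : Finset V := Finset.univ.filter (fun w => G.Adj u w ∧ f a < f w)
  obtain ⟨w, hwW, hwmin⟩ := Finset.exists_min_image W f
    ⟨w1, by simp only [W, Finset.mem_filter, Finset.mem_univ, true_and]; exact ⟨hw1adj, hw1⟩⟩
  simp only [W, Finset.mem_filter, Finset.mem_univ, true_and] at hwW
  obtain ⟨huw, hw⟩ := hwW
  have hwmin' : ∀ w', G.Adj u w' → f a < f w' → f w ≤ f w' := by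
    intro w' h1 h2
    exact hwmin w' (by simp only [W, Finset.mem_filter, Finset.mem_univ, true_and]; exact ⟨h1, h2⟩)
  have hbw : f b ≤ f w := le_of_not_gt (fun h => hemp w ⟨hw, h⟩)
  rcases lt_or_eq_of_le hu1 with hua | hua
  · -- case f u < f a : left part isolated, contradiction with 2-connectivity
    obtain ⟨c, d, hc, hd, hdu, hcd⟩ := aux_cut_edge2 hbic (v := u)
      (S := {z | f u < f z ∧ f z ≤ f a}) (a := a) (b := w)
      (fun h => lt_irrefl _ h.1) ⟨hua, le_refl _⟩
      (fun h => absurd hw (not_lt.mpr h.2)) (fun h => (h ▸ (hu1.trans_lt hw)).false)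
    rcases le_or_gt (f d) (f a) with hda | hda
    · have hd' : f d ≤ f u := by
        by_contra hh
        exact hd ⟨not_le.mp hh, hda⟩
      have hd'' : f d < f u := lt_of_le_of_ne hd' (fun h => hdu (hinj h))
      exact hnc d c u w hcd.symm huw ⟨hd'', hc.1, lt_of_le_of_lt hc.2 hw⟩
    · have : f c ≤ f u := humax' c d hcd hc.2 hda
      exact absurd hc.1 (not_lt.mpr this)
  · -- case f u = f a, i.e. u = a
    have hfu : f u = f a := hua
    have huwne : u ≠ w := G.ne_of_adj huw
    have hwb : f b < f w := by
      rcases lt_or_eq_of_le hbw with h | h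
      · exact h
      · exact absurd ((hinj hfu) ▸ ((hinj h).symm ▸ huw)) hnadj
    obtain ⟨c, d, hc, hd, hdw, hcd⟩ := aux_cut_edge2 hbic (v := w)
      (S := {z | f u < f z ∧ f z < f w}) (a := b) (b := u)
      (fun h => lt_irrefl _ h.2) ⟨by rw [hfu]; exact hab, hwb⟩
      (fun h => lt_irrefl _ h.1) huwne
    rcases le_or_gt (f d) (f u) with hda | hda
    · rcases lt_or_eq_of_le hda with h1 | h1
      · exact hnc d c u w hcd.symm huw ⟨h1, hc.1, hc.2⟩
      · have : d = u := hinj h1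
        subst this
        exact absurd hc.2 (not_lt.mpr (hwmin' c hcd.symm (by rw [← hfu]; exact hc.1)))
    · have hwd : f w ≤ f d := by
        by_contra hh
        exact hd ⟨hda, not_le.mp hh⟩
      have hwd' : f w < f d := lt_of_le_of_ne hwd (fun h => hdw (hinj h).symm)
      exact hnc u w c d huw hcd ⟨hc.1, hc.2, hwd'⟩

lemma aux_deg_eq_two (hinj : Function.Injective f)
    (hnc : ∀ a b c d : V, G.Adj a b → G.Adj c d → ¬(f a < f c ∧ f c < f b ∧ f b < f d))
    (hconn : G.Connected) (hbic : ∀ v : V, (G.induce {u | u ≠ v}).Connected)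
    {p q c : V} (hpq : G.Adj p q) (hc1 : f p < f c) (hc2 : f c < f q)
    (hmin : ∀ r s : V, G.Adj r s → (∃ z, f r < f z ∧ f z < f s) →
      {z | f r < f z ∧ f z < f s} ⊆ {z | f p < f z ∧ f z < f q} \ {c} →
      ({z | f p < f z ∧ f z < f q}).ncard ≤ ({z | f r < f z ∧ f z < f s}).ncard) :
    G.deg c = 2 := by
  classical
  have key : ∀ r s : V, G.Adj r s →
      {z | f r < f z ∧ f z < f s} ⊆ {z | f p < f z ∧ f z < f q} \ {c} →
      ∀ z, ¬(f r < f z ∧ f z < f s) := by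
    intro r s hrs hsub z hz
    have hlt : ({z | f r < f z ∧ f z < f s}).ncard < ({z | f p < f z ∧ f z < f q}).ncard := by
      apply Set.ncard_lt_ncard _ (Set.toFinite _)
      constructor
      · exact fun y hy => (hsub hy).1
      · intro hsup
        have hmem := hsup (Set.mem_setOf.mpr ⟨hc1, hc2⟩)
        exact (hsub hmem).2 rfl
    exact absurd (hmin r s hrs ⟨z, hz⟩ hsub) (not_le.mpr hlt)
  have hshortU : ∀ d, G.Adj c d → f c < f d → ∀ z, ¬(f c < f z ∧ f z < f d) := by
    intro d hcd hcd'
    have hdq : f d ≤ f q := by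
      by_contra hh
      exact hnc p q c d hpq hcd ⟨hc1, hc2, not_le.mp hh⟩
    apply key c d hcd
    rintro y ⟨h1, h2⟩
    exact ⟨⟨hc1.trans h1, lt_of_lt_of_le h2 hdq⟩,
      fun hy => lt_irrefl (f c) (by rw [Set.mem_singleton_iff] at hy; rw [hy] at h1; exact h1)⟩
  have hshortL : ∀ d, G.Adj c d → f d < f c → ∀ z, ¬(f d < f z ∧ f z < f c) := by
    intro d hcd hcd'
    have hdp : f p ≤ f d := by
      by_contra hh
      exact hnc d c p q hcd.symm hpq ⟨not_le.mp hh, hc1, hc2⟩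
    apply key d c hcd.symm
    rintro y ⟨h1, h2⟩
    exact ⟨⟨lt_of_le_of_lt hdp h1, h2.trans hc2⟩,
      fun hy => lt_irrefl (f c) (by rw [Set.mem_singleton_iff] at hy; rw [hy] at h2; exact h2)⟩
  obtain ⟨pp, hppmem, hppmax⟩ := Finset.exists_max_image
    (Finset.univ.filter fun z => f z < f c) f
    ⟨p, by simp only [Finset.mem_filter, Finset.mem_univ, true_and]; exact hc1⟩
  simp only [Finset.mem_filter, Finset.mem_univ, true_and] at hppmem
  have hppmax' : ∀ z, f z < f c → f z ≤ f pp := fun z hz =>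
    hppmax z (by simp only [Finset.mem_filter, Finset.mem_univ, true_and]; exact hz)
  obtain ⟨ss, hssmem, hssmin⟩ := Finset.exists_min_image
    (Finset.univ.filter fun z => f c < f z) f
    ⟨q, by simp only [Finset.mem_filter, Finset.mem_univ, true_and]; exact hc2⟩
  simp only [Finset.mem_filter, Finset.mem_univ, true_and] at hssmem
  have hssmin' : ∀ z, f c < f z → f ss ≤ f z := fun z hz =>
    hssmin z (by simp only [Finset.mem_filter, Finset.mem_univ, true_and]; exact hz)
  have hadjpp : G.Adj pp c := aux_adj_of_cover hinj hnc hconn hbic hppmem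
    (fun z hz => absurd (hppmax' z hz.2) (not_le.mpr hz.1))
  have hadjss : G.Adj c ss := aux_adj_of_cover hinj hnc hconn hbic hssmem
    (fun z hz => absurd (hssmin' z hz.1) (not_le.mpr hz.2))
  have hN : G.neighborSet c = {pp, ss} := by
    ext d
    constructor
    · intro hd
      have hd' : G.Adj c d := hd
      rcases lt_trichotomy (f d) (f c) with h | h | h
      · left
        rcases lt_or_eq_of_le (hppmax' d h) with h1 | h1
        · exact absurd ⟨h1, hppmem⟩ (hshortL d hd' h pp)
        · exact hinj h1
      · exact absurd (hinj h) (G.ne_of_adj hd').symm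
      · right
        rcases lt_or_eq_of_le (hssmin' d h) with h1 | h1
        · exact absurd ⟨hssmem, h1⟩ (hshortU d hd' h ss)
        · exact (hinj h1).symm
    · rintro (rfl | rfl)
      · exact hadjpp.symm
      · exact hadjss
  have hne : pp ≠ ss := fun h => lt_asymm hppmem (h ▸ hssmem)
  rw [SimpleGraph.deg, hN, Set.ncard_pair hne]

end Aux

/-- Every finite biconnected outerplanar graph has at least two
vertices of degree 2. -/
theorem stmt5 {V : Type*} [Fintype V] (G : SimpleGraph V)
    (hout : G.IsOuterplanar) (hbi : G.Biconnected) :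
    ∃ u v : V, u ≠ v ∧ G.deg u = 2 ∧ G.deg v = 2 := by
  classical
  obtain ⟨f, hinj, hnc⟩ := hout
  obtain ⟨hcard, hconn, hbic⟩ := hbi
  have hVne : (Finset.univ : Finset V).Nonempty := by
    rw [← Finset.card_pos, Finset.card_univ]; omega
  obtain ⟨x1, -, hx1min⟩ := Finset.exists_min_image Finset.univ f hVne
  obtain ⟨xn, -, hxnmax⟩ := Finset.exists_max_image Finset.univ f hVne
  have hx1min' : ∀ z : V, f x1 ≤ f z := fun z => hx1min z (Finset.mem_univ z)
  have hxnmax' : ∀ z : V, f z ≤ f xn := fun z => hxnmax z (Finset.mem_univ z)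
  have hthird : ∀ a b : V, ∃ y : V, y ≠ a ∧ y ≠ b := by
    intro a b
    by_contra hy
    push_neg at hy
    have hsub : (Finset.univ : Finset V) ⊆ {a, b} := by
      intro y _
      rcases eq_or_ne y a with h | h
      · simp [h]
      · simp [hy y h]
    have hc2 := Finset.card_le_card hsub
    rw [Finset.card_univ] at hc2
    have h2 : ({a, b} : Finset V).card ≤ 2 := by
      apply le_trans (Finset.card_insert_le _ _)
      simp
    omega
  -- the cover x2 of x1
  have hx1erase : (Finset.univ.erase x1).Nonempty := by
    rw [← Finset.card_pos, Finset.card_erase_of_mem (Finset.mem_univ x1), Finset.card_univ]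
    omega
  obtain ⟨x2, hx2mem, hx2min⟩ := Finset.exists_min_image (Finset.univ.erase x1) f hx1erase
  have hx2ne : x2 ≠ x1 := (Finset.mem_erase.mp hx2mem).1
  have hx2min' : ∀ z : V, z ≠ x1 → f x2 ≤ f z := fun z hz =>
    hx2min z (Finset.mem_erase.mpr ⟨hz, Finset.mem_univ z⟩)
  have hx12 : f x1 < f x2 := lt_of_le_of_ne (hx1min' x2) (fun h => hx2ne (hinj h).symm)
  -- long edge at x1
  obtain ⟨w1, hw1adj, hw1long⟩ : ∃ w, G.Adj x1 w ∧ f x2 < f w := by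
    obtain ⟨y, hy1, hy2⟩ := hthird x1 x2
    obtain ⟨u, w, hu, hw, hwne, hadj⟩ := aux_cut_edge2 hbic (v := x2) (S := {x1})
      (a := x1) (b := y) (fun h => hx2ne h) rfl hy1 hy2
    have hux1 : u = x1 := hu
    have hwx1 : w ≠ x1 := hw
    exact ⟨w, hux1 ▸ hadj, lt_of_le_of_ne (hx2min' w hwx1) (fun h => hwne (hinj h).symm)⟩
  -- the cover xm of xn from below
  have hxnerase : (Finset.univ.erase xn).Nonempty := by
    rw [← Finset.card_pos, Finset.card_erase_of_mem (Finset.mem_univ xn), Finset.card_univ]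
    omega
  obtain ⟨xm, hxmmem, hxmmax⟩ := Finset.exists_max_image (Finset.univ.erase xn) f hxnerase
  have hxmne : xm ≠ xn := (Finset.mem_erase.mp hxmmem).1
  have hxmmax' : ∀ z : V, z ≠ xn → f z ≤ f xm := fun z hz =>
    hxmmax z (Finset.mem_erase.mpr ⟨hz, Finset.mem_univ z⟩)
  have hxm : f xm < f xn := lt_of_le_of_ne (hxnmax' xm) (fun h => hxmne (hinj h))
  -- long edge at xn
  obtain ⟨wn, hwnadj, hwnlong⟩ : ∃ w, G.Adj w xn ∧ f w < f xm := by
    obtain ⟨y, hy1, hy2⟩ := hthird xn xm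
    obtain ⟨u, w, hu, hw, hwne, hadj⟩ := aux_cut_edge2 hbic (v := xm) (S := {xn})
      (a := xn) (b := y) (fun h => hxmne h) rfl hy1 hy2
    have hux : u = xn := hu
    have hwx : w ≠ xn := hw
    exact ⟨w, (hux ▸ hadj).symm, lt_of_le_of_ne (hxmmax' w hwx) (fun h => hwne (hinj h))⟩
  -- minimal long edge
  let LS : Finset (V × V) := Finset.univ.filter
    (fun e => G.Adj e.1 e.2 ∧ ∃ z, f e.1 < f z ∧ f z < f e.2)
  have hLSne : LS.Nonempty := ⟨(x1, w1), by
    simp only [LS, Finset.mem_filter, Finset.mem_univ, true_and]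
    exact ⟨hw1adj, x2, hx12, hw1long⟩⟩
  obtain ⟨e, heLS, hemin⟩ := Finset.exists_min_image LS
    (fun e => ({z | f e.1 < f z ∧ f z < f e.2}).ncard) hLSne
  simp only [LS, Finset.mem_filter, Finset.mem_univ, true_and] at heLS
  obtain ⟨hpq, c, hc1, hc2⟩ := heLS
  have hdegc : G.deg c = 2 := aux_deg_eq_two hinj hnc hconn hbic hpq hc1 hc2
    (fun r s hrs hlong _ => hemin (r, s)
      (by simp only [LS, Finset.mem_filter, Finset.mem_univ, true_and]; exact ⟨hrs, hlong⟩))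
  by_cases hall : ∀ r s : V, G.Adj r s → (∃ z, f r < f z ∧ f z < f s) → f r < f c ∧ f c < f s
  · -- every long edge contains c in its interior
    have hcx1 : f x1 < f c := lt_of_le_of_lt (hx1min' e.1) hc1
    have hcxn : f c < f xn := lt_of_lt_of_le hc2 (hxnmax' e.2)
    have hadjx12 : G.Adj x1 x2 := aux_adj_of_cover hinj hnc hconn hbic hx12
      (fun z hz => absurd (hx2min' z (fun h => lt_irrefl (f x1) (h ▸ hz.1)))
        (not_le.mpr hz.2))
    have hadjmn : G.Adj xm xn := aux_adj_of_cover hinj hnc hconn hbic hxm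
      (fun z hz => absurd (hxmmax' z (fun h => lt_irrefl (f xn) (h ▸ hz.2)))
        (not_le.mpr hz.1))
    have hkey : G.deg x1 = 2 ∨ G.deg xn = 2 := by
      by_contra hb
      push_neg at hb
      obtain ⟨hb1, hbn⟩ := hb
      -- a "far" neighbor b of x1 with b ≠ xn
      obtain ⟨b, hbadj, hbx2, hbxn⟩ : ∃ b, G.Adj x1 b ∧ b ≠ x2 ∧ b ≠ xn := by
        have hw1nex2 : w1 ≠ x2 := fun h => lt_irrefl _ (h ▸ hw1long)
        have hx1sub : ({x2, w1} : Set V) ⊆ G.neighborSet x1 := by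
          intro y hy
          rcases Set.mem_insert_iff.mp hy with rfl | h
          · exact hadjx12
          · rw [Set.mem_singleton_iff] at h
            subst h
            exact hw1adj
        have h2le : 2 ≤ (G.neighborSet x1).ncard := by
          rw [← Set.ncard_pair (Ne.symm hw1nex2)]
          exact Set.ncard_le_ncard hx1sub (Set.toFinite _)
        have hthirdnb : ∃ t, G.Adj x1 t ∧ t ≠ x2 ∧ t ≠ w1 := by
          by_contra ht
          push_neg at ht
          have hsub2 : G.neighborSet x1 ⊆ {x2, w1} := by
            intro y hy
            rcases eq_or_ne y x2 with h | h
            · exact Or.inl h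
            · exact Or.inr (ht y hy h)
          have hle2 := Set.ncard_le_ncard hsub2 (Set.toFinite _)
          rw [Set.ncard_pair (Ne.symm hw1nex2)] at hle2
          exact hb1 (le_antisymm hle2 h2le)
        obtain ⟨t, htadj, htx2, htw1⟩ := hthirdnb
        rcases eq_or_ne w1 xn with h | h
        · exact ⟨t, htadj, htx2, fun hh => htw1 (hh.trans h.symm)⟩
        · exact ⟨w1, hw1adj, hw1nex2, h⟩
      have hbx1 : b ≠ x1 := (G.ne_of_adj hbadj).symm
      have hx2b : f x2 < f b := lt_of_le_of_ne (hx2min' b hbx1) (fun h => hbx2 (hinj h).symm)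
      have hbn' : f b < f xn := lt_of_le_of_ne (hxnmax' b) (fun h => hbxn (hinj h))
      -- a "far" neighbor a of xn with a ≠ x1
      obtain ⟨a, haadj, haxm, hax1⟩ : ∃ a, G.Adj a xn ∧ a ≠ xm ∧ a ≠ x1 := by
        have hwnnexm : wn ≠ xm := fun h => lt_irrefl _ (h ▸ hwnlong)
        have hxnsub : ({xm, wn} : Set V) ⊆ G.neighborSet xn := by
          intro y hy
          rcases Set.mem_insert_iff.mp hy with rfl | h
          · exact hadjmn.symm
          · rw [Set.mem_singleton_iff] at h
            subst h
            exact hwnadj.symm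
        have h2le : 2 ≤ (G.neighborSet xn).ncard := by
          rw [← Set.ncard_pair (Ne.symm hwnnexm)]
          exact Set.ncard_le_ncard hxnsub (Set.toFinite _)
        have hthirdnb : ∃ t, G.Adj xn t ∧ t ≠ xm ∧ t ≠ wn := by
          by_contra ht
          push_neg at ht
          have hsub2 : G.neighborSet xn ⊆ {xm, wn} := by
            intro y hy
            rcases eq_or_ne y xm with h | h
            · exact Or.inl h
            · exact Or.inr (ht y hy h)
          have hle2 := Set.ncard_le_ncard hsub2 (Set.toFinite _)
          rw [Set.ncard_pair (Ne.symm hwnnexm)] at hle2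
          exact hbn (le_antisymm hle2 h2le)
        obtain ⟨t, htadj, htxm, htwn⟩ := hthirdnb
        rcases eq_or_ne wn x1 with h | h
        · exact ⟨t, htadj.symm, htxm, fun hh => htwn (hh.trans h.symm)⟩
        · exact ⟨wn, hwnadj, hwnnexm, h⟩
      have haxn : a ≠ xn := G.ne_of_adj haadj
      have ham : f a < f xm := lt_of_le_of_ne (hxmmax' a haxn) (fun h => haxm (hinj h))
      have hax1' : f x1 < f a := lt_of_le_of_ne (hx1min' a) (fun h => hax1 (hinj h).symm)
      have h1 := hall x1 b hbadj ⟨x2, hx12, hx2b⟩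
      have h2 := hall a xn haadj ⟨xm, ham, hxm⟩
      exact hnc x1 b a xn hbadj haadj ⟨hax1', h2.1.trans h1.2, hbn'⟩
    rcases hkey with h | h
    · exact ⟨c, x1, fun hh => lt_irrefl (f x1) (hh ▸ hcx1), hdegc, h⟩
    · exact ⟨c, xn, fun hh => lt_irrefl (f xn) (hh ▸ hcxn), hdegc, h⟩
  · -- there is a long edge avoiding c
    push_neg at hall
    obtain ⟨r, s, hrs, hrslong, hfree0⟩ := hall
    have hfree : ¬(f r < f c ∧ f c < f s) := fun hh => absurd hh.2 (not_lt.mpr (hfree0 hh.1))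
    let LS2 : Finset (V × V) := Finset.univ.filter
      (fun e => (G.Adj e.1 e.2 ∧ ∃ z, f e.1 < f z ∧ f z < f e.2) ∧
        ¬(f e.1 < f c ∧ f c < f e.2))
    have hLS2ne : LS2.Nonempty := ⟨(r, s), by
      simp only [LS2, Finset.mem_filter, Finset.mem_univ, true_and]
      exact ⟨⟨hrs, hrslong⟩, hfree⟩⟩
    obtain ⟨e', he'LS, he'min⟩ := Finset.exists_min_image LS2
      (fun e => ({z | f e.1 < f z ∧ f z < f e.2}).ncard) hLS2ne
    simp only [LS2, Finset.mem_filter, Finset.mem_univ, true_and] at he'LS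
    obtain ⟨⟨hpq', c', hc1', hc2'⟩, hfree'⟩ := he'LS
    have hcne : c' ≠ c := fun h => hfree' (h ▸ ⟨hc1', hc2'⟩)
    have hdegc' : G.deg c' = 2 := by
      apply aux_deg_eq_two hinj hnc hconn hbic hpq' hc1' hc2'
      intro r' s' hr's' hlong' hsub
      apply he'min (r', s')
      simp only [LS2, Finset.mem_filter, Finset.mem_univ, true_and]
      refine ⟨⟨hr's', hlong'⟩, fun hcc => hfree' ?_⟩
      exact (hsub hcc).1
    exact ⟨c, c', fun h => hcne h.symm, hdegc, hdegc'⟩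
end

section
/- Let G be a finite connected outerplanar simple graph with maximum degree Δ. If G is not isomorphic to the 5-cycle C₅, then ω(G²) ≤ Δ + 2; moreover, for G = C₅ one has ω(G²) = 5 = Δ + 3. -/
open SimpleGraph

namespace Stmt13Aux

open Finset

open scoped Classical

variable {V : Type*} {G : SimpleGraph V} {f : V → ℕ}

/-- noncrossing condition -/
def NC (G : SimpleGraph V) (f : V → ℕ) : Prop :=
  ∀ a b c d : V, G.Adj a b → G.Adj c d → ¬(f a < f c ∧ f c < f b ∧ f b < f d)

lemma ncx (hnc : NC G f) {p q r s : V} (h1 : G.Adj p q) (h2 : G.Adj r s)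
    (o1 : f p < f r) (o2 : f r < f q) (o3 : f q < f s) : False :=
  hnc _ _ _ _ h1 h2 ⟨o1, o2, o3⟩

lemma middle_unique (hnc : NC G f) (hinj : Function.Injective f) {x y z z' : V}
    (h1 : G.Adj x z) (h2 : G.Adj z y) (h1' : G.Adj x z') (h2' : G.Adj z' y)
    (p1 : f x < f z) (p2 : f z < f y) (p1' : f x < f z') (p2' : f z' < f y) : z = z' := by
  rcases lt_trichotomy (f z) (f z') with h | h | h
  · exact absurd (ncx hnc h1' h2 p1 h p2') (fun hf => hf)
  · exact hinj h
  · exact absurd (ncx hnc h1 h2' p1' h p2) (fun hf => hf)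

section Counting

variable [Fintype V]

noncomputable def nbr (G : SimpleGraph V) (g : V) : Finset V :=
  Set.Finite.toFinset (Set.toFinite (G.neighborSet g))

lemma mem_nbr {g w : V} : w ∈ nbr G g ↔ G.Adj g w := by
  simp [nbr]

lemma card_nbr (g : V) : (nbr G g).card = G.deg g := by
  rw [SimpleGraph.deg, Set.ncard_eq_toFinset_card _ (Set.toFinite _)]
  rfl

lemma deg_le_maxDeg (g : V) : G.deg g ≤ G.maxDeg := by
  exact Finset.le_sup (f := fun v => G.deg v) (Finset.mem_univ g)

lemma count2 {S : Finset V} {g u v : V}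
    (h : ∀ s ∈ S, s = u ∨ s = v ∨ G.Adj g s) : S.card ≤ G.deg g + 2 := by
  have hsub : S ⊆ insert u (insert v (nbr G g)) := by
    intro s hs
    rcases h s hs with rfl | rfl | h
    · exact mem_insert_self _ _
    · exact mem_insert_of_mem (mem_insert_self _ _)
    · exact mem_insert_of_mem (mem_insert_of_mem (mem_nbr.2 h))
  calc S.card ≤ _ := Finset.card_le_card hsub
    _ ≤ (insert v (nbr G g)).card + 1 := Finset.card_insert_le _ _
    _ ≤ (nbr G g).card + 1 + 1 := by
        have := Finset.card_insert_le v (nbr G g); omega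
    _ = G.deg g + 2 := by rw [card_nbr]

lemma count1 {S : Finset V} {g u : V}
    (h : ∀ s ∈ S, s = u ∨ G.Adj g s) : S.card ≤ G.deg g + 1 := by
  have := count2 (S := S) (g := g) (u := u) (v := u) (fun s hs => by
    rcases h s hs with h | h
    · exact Or.inl h
    · exact Or.inr (Or.inr h))
  -- need tighter: card ≤ deg + 1
  have hsub : S ⊆ insert u (nbr G g) := by
    intro s hs
    rcases h s hs with rfl | h
    · exact mem_insert_self _ _
    · exact mem_insert_of_mem (mem_nbr.2 h)
  calc S.card ≤ _ := Finset.card_le_card hsub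
    _ ≤ (nbr G g).card + 1 := Finset.card_insert_le _ _
    _ = G.deg g + 1 := by rw [card_nbr]

lemma count0 {S : Finset V} {g : V}
    (h : ∀ s ∈ S, G.Adj g s) : S.card ≤ G.deg g := by
  have hsub : S ⊆ nbr G g := fun s hs => mem_nbr.2 (h s hs)
  rw [← card_nbr]; exact Finset.card_le_card hsub

lemma deg_ge_two {g w1 w2 : V} (h1 : G.Adj g w1) (h2 : G.Adj g w2) (hne : w1 ≠ w2) :
    2 ≤ G.deg g := by
  have hsub : ({w1, w2} : Finset V) ⊆ nbr G g := by
    intro s hs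
    rcases Finset.mem_insert.1 hs with rfl | hs
    · exact mem_nbr.2 h1
    · rw [Finset.mem_singleton] at hs; subst hs; exact mem_nbr.2 h2
  have := Finset.card_le_card hsub
  rw [card_nbr] at this
  rwa [Finset.card_insert_of_notMem (by simp [hne]), Finset.card_singleton] at this

lemma deg_ge_three {g w1 w2 w3 : V} (h1 : G.Adj g w1) (h2 : G.Adj g w2) (h3 : G.Adj g w3)
    (h12 : w1 ≠ w2) (h13 : w1 ≠ w3) (h23 : w2 ≠ w3) : 3 ≤ G.deg g := by
  have hsub : ({w1, w2, w3} : Finset V) ⊆ nbr G g := by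
    intro s hs
    simp only [Finset.mem_insert, Finset.mem_singleton] at hs
    rcases hs with rfl | rfl | rfl
    exacts [mem_nbr.2 h1, mem_nbr.2 h2, mem_nbr.2 h3]
  have := Finset.card_le_card hsub
  rw [card_nbr] at this
  rw [Finset.card_insert_of_notMem (by simp [h12, h13]),
    Finset.card_insert_of_notMem (by simp [h23]), Finset.card_singleton] at this
  exact this

lemma deg_ge_four {g w1 w2 w3 w4 : V} (h1 : G.Adj g w1) (h2 : G.Adj g w2) (h3 : G.Adj g w3)
    (h4 : G.Adj g w4) (h12 : w1 ≠ w2) (h13 : w1 ≠ w3) (h14 : w1 ≠ w4) (h23 : w2 ≠ w3)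
    (h24 : w2 ≠ w4) (h34 : w3 ≠ w4) : 4 ≤ G.deg g := by
  have hsub : ({w1, w2, w3, w4} : Finset V) ⊆ nbr G g := by
    intro s hs
    simp only [Finset.mem_insert, Finset.mem_singleton] at hs
    rcases hs with rfl | rfl | rfl | rfl
    exacts [mem_nbr.2 h1, mem_nbr.2 h2, mem_nbr.2 h3, mem_nbr.2 h4]
  have := Finset.card_le_card hsub
  rw [card_nbr] at this
  rw [Finset.card_insert_of_notMem (by simp [h12, h13, h14]),
    Finset.card_insert_of_notMem (by simp [h23, h24]),
    Finset.card_insert_of_notMem (by simp [h34]), Finset.card_singleton] at this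
  exact this

end Counting

end Stmt13Aux

namespace Stmt13Aux

open Finset SimpleGraph

open scoped Classical

variable {V : Type*} {G : SimpleGraph V}

set_option maxHeartbeats 2000000 in
lemma build5 [Fintype V] (hconn : G.Connected) (hD : G.maxDeg ≤ 2)
    (v0 v1 v2 v3 v4 : V)
    (d01 : v0 ≠ v1) (d02 : v0 ≠ v2) (d03 : v0 ≠ v3) (d04 : v0 ≠ v4)
    (d12 : v1 ≠ v2) (d13 : v1 ≠ v3) (d14 : v1 ≠ v4)
    (d23 : v2 ≠ v3) (d24 : v2 ≠ v4) (d34 : v3 ≠ v4)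
    (e01 : G.Adj v0 v1) (e12 : G.Adj v1 v2) (e23 : G.Adj v2 v3)
    (e34 : G.Adj v3 v4) (e40 : G.Adj v4 v0) :
    Nonempty (G ≃g cycleGraph 5) := by
  have pin : ∀ x y z : V, G.Adj x y → G.Adj x z → y ≠ z → G.neighborSet x = {y, z} := by
    intro x y z hxy hxz hyz
    refine (Set.eq_of_subset_of_ncard_le ?_ ?_ (Set.toFinite _)).symm
    · intro w hw
      rcases Set.mem_insert_iff.1 hw with rfl | hw
      · exact hxy
      · rw [Set.mem_singleton_iff] at hw; subst hw; exact hxz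
    · rw [Set.ncard_pair hyz]
      exact (deg_le_maxDeg x).trans hD
  have hN0 : G.neighborSet v0 = {v1, v4} := pin _ _ _ e01 e40.symm d14
  have hN1 : G.neighborSet v1 = {v2, v0} := pin _ _ _ e12 e01.symm (Ne.symm d02)
  have hN2 : G.neighborSet v2 = {v3, v1} := pin _ _ _ e23 e12.symm (Ne.symm d13)
  have hN3 : G.neighborSet v3 = {v4, v2} := pin _ _ _ e34 e23.symm (Ne.symm d24)
  have hN4 : G.neighborSet v4 = {v0, v3} := pin _ _ _ e40 e34.symm d03
  have step : ∀ (u x y z : V), G.neighborSet u = {y, z} → G.Adj u x → (x = y ∨ x = z) := by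
    intro u x y z hN h
    have hx : x ∈ G.neighborSet u := h
    rw [hN] at hx
    rcases Set.mem_insert_iff.1 hx with rfl | h'
    · exact Or.inl rfl
    · exact Or.inr (Set.mem_singleton_iff.1 h')
  have hW : ∀ v : V, v = v0 ∨ v = v1 ∨ v = v2 ∨ v = v3 ∨ v = v4 := by
    have key : ∀ (u w : V) (_ : G.Walk u w),
        (u = v0 ∨ u = v1 ∨ u = v2 ∨ u = v3 ∨ u = v4) →
        (w = v0 ∨ w = v1 ∨ w = v2 ∨ w = v3 ∨ w = v4) := by
      intro u w p
      induction p with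
      | nil => exact id
      | @cons u x w h p ih =>
        intro hu
        apply ih
        rcases hu with rfl | rfl | rfl | rfl | rfl
        · rcases step _ _ _ _ hN0 h with rfl | rfl <;> tauto
        · rcases step _ _ _ _ hN1 h with rfl | rfl <;> tauto
        · rcases step _ _ _ _ hN2 h with rfl | rfl <;> tauto
        · rcases step _ _ _ _ hN3 h with rfl | rfl <;> tauto
        · rcases step _ _ _ _ hN4 h with rfl | rfl <;> tauto
    intro v
    obtain ⟨p⟩ := hconn.preconnected v0 v
    exact key v0 v p (Or.inl rfl)
  let e : Fin 5 → V := fun i => match i with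
    | 0 => v0 | 1 => v1 | 2 => v2 | 3 => v3 | 4 => v4
  let einv : V → Fin 5 := fun v =>
    if v = v0 then 0 else if v = v1 then 1 else if v = v2 then 2 else if v = v3 then 3 else 4
  have hli : Function.LeftInverse einv e := by
    intro i
    fin_cases i <;>
      simp [e, einv, d01.symm, d02.symm, d03.symm, d04.symm, d12.symm, d13.symm, d14.symm,
        d23.symm, d24.symm, d34.symm]
  have hri : Function.RightInverse einv e := by
    intro v
    rcases hW v with rfl | rfl | rfl | rfl | rfl <;>
      simp [e, einv, d01.symm, d02.symm, d03.symm, d04.symm, d12.symm, d13.symm, d14.symm,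
        d23.symm, d24.symm, d34.symm]
  have hinj : Function.Injective e := hli.injective
  have hN : ∀ i : Fin 5, G.neighborSet (e i) = {e (i + 1), e (i - 1)} := by
    intro i
    fin_cases i
    · exact hN0
    · exact hN1
    · exact hN2
    · exact hN3
    · exact hN4
  have hcyc : ∀ i j : Fin 5, ((j = i + 1 ∨ j = i - 1) ↔ (cycleGraph 5).Adj i j) := by decide
  refine ⟨SimpleGraph.Iso.symm ⟨⟨e, einv, hli, hri⟩, ?_⟩⟩
  intro i j
  show G.Adj (e i) (e j) ↔ (cycleGraph 5).Adj i j
  rw [← SimpleGraph.mem_neighborSet, hN i]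
  simp only [Set.mem_insert_iff, Set.mem_singleton_iff, hinj.eq_iff]
  exact hcyc i j


/-- pairwise square-adjacency (clique in the square), in convenient form -/
def SqC {V : Type*} (G : SimpleGraph V) (S : Finset V) : Prop :=
  ∀ u ∈ S, ∀ v ∈ S, u ≠ v → (G.Adj u v ∨ ∃ w, G.Adj u w ∧ G.Adj w v)

section Case2

variable [Fintype V] {S : Finset V} {a b m : V}

lemma case2 (hnc : NC G f) (hinj : Function.Injective f) (hS : SqC G S)
    (ha : a ∈ S) (hb : b ∈ S)
    (hmin : ∀ s ∈ S, f a ≤ f s) (hmax : ∀ s ∈ S, f s ≤ f b) (hnab : ¬ G.Adj a b)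
    (ham : G.Adj a m) (hmb : G.Adj m b) (h1 : f a < f m) (h2 : f m < f b) :
    S.card ≤ G.deg m + 1 := by
  apply count1 (u := m)
  intro s hs
  by_cases hsm : s = m
  · exact Or.inl hsm
  right
  rcases lt_trichotomy (f s) (f m) with hsm' | hsm' | hsm'
  · by_cases hsa : s = a
    · subst hsa; exact ham.symm
    · have hfa : f a < f s := lt_of_le_of_ne (hmin s hs) (fun h => hsa (hinj h).symm)
      have hsb : s ≠ b := fun h => by subst h; omega
      rcases hS s hs b hb hsb with hadj | ⟨w, hsw, hwb⟩
      · exact (ncx hnc ham hadj hfa hsm' h2).elim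
      · rcases lt_trichotomy (f w) (f m) with hw | hw | hw
        · rcases lt_trichotomy (f w) (f a) with hwa | hwa | hwa
          · exact (ncx hnc hsw.symm ham hwa hfa hsm').elim
          · have hwa' : w = a := hinj hwa
            subst hwa'; exact absurd hwb hnab
          · exact (ncx hnc ham hwb hwa hw h2).elim
        · have hwm : w = m := hinj hw
          subst hwm; exact hsw.symm
        · exact (ncx hnc ham hsw hfa hsm' hw).elim
  · exact absurd (hinj hsm') hsm
  · by_cases hsb : s = b
    · subst hsb; exact hmb
    · have hfb : f s < f b := lt_of_le_of_ne (hmax s hs) (fun h => hsb (hinj h))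
      have hsa : s ≠ a := fun h => by subst h; omega
      rcases hS s hs a ha hsa with hadj | ⟨w, hsw, hwa⟩
      · exact (ncx hnc hadj.symm hmb h1 hsm' hfb).elim
      · rcases lt_trichotomy (f w) (f m) with hw | hw | hw
        · exact (ncx hnc hsw.symm hmb hw hsm' hfb).elim
        · have hwm : w = m := hinj hw
          subst hwm; exact hsw.symm
        · rcases lt_trichotomy (f w) (f b) with hwb | hwb | hwb
          · exact (ncx hnc hwa.symm hmb h1 hw hwb).elim
          · have hwb' : w = b := hinj hwb
            subst hwb'; exact absurd hwa.symm hnab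
          · exact (ncx hnc hmb hsw hsm' hfb hwb).elim

end Case2


/-- `x` is a gate of `a` (an internal neighbor of `a`) -/
def isX {V : Type*} (G : SimpleGraph V) (f : V → ℕ) (a b x : V) : Prop :=
  G.Adj a x ∧ f a < f x ∧ f x < f b

/-- `y` is a gate of `b` -/
def isY {V : Type*} (G : SimpleGraph V) (f : V → ℕ) (a b y : V) : Prop :=
  G.Adj b y ∧ f a < f y ∧ f y < f b

section CountExtra

variable [Fintype V]

lemma count5 {S : Finset V} {u1 u2 u3 u4 u5 : V}
    (h : ∀ s ∈ S, s = u1 ∨ s = u2 ∨ s = u3 ∨ s = u4 ∨ s = u5) : S.card ≤ 5 := by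
  classical
  have hsub : S ⊆ insert u1 (insert u2 (insert u3 (insert u4 {u5}))) := by
    intro s hs
    rcases h s hs with rfl | rfl | rfl | rfl | rfl <;> simp
  have h1 := Finset.card_le_card hsub
  have h2 := Finset.card_insert_le u1 (insert u2 (insert u3 (insert u4 ({u5} : Finset V))))
  have h3 := Finset.card_insert_le u2 (insert u3 (insert u4 ({u5} : Finset V)))
  have h4 := Finset.card_insert_le u3 (insert u4 ({u5} : Finset V))
  have h5 := Finset.card_insert_le u4 ({u5} : Finset V)
  have h6 : ({u5} : Finset V).card = 1 := Finset.card_singleton _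
  omega

end CountExtra

section Case3

variable [Fintype V] {S : Finset V} {a b m : V}

lemma case3 (hnc : NC G f) (hinj : Function.Injective f) (hS : SqC G S)
    (ha : a ∈ S) (hb : b ∈ S)
    (hmin : ∀ s ∈ S, f a ≤ f s) (hmax : ∀ s ∈ S, f s ≤ f b) (hfab : f a < f b)
    (hnab : ¬ G.Adj a b)
    (ham : G.Adj a m) (hmb : G.Adj m b) (hm : f m < f a)
    (hno : ∀ w, G.Adj a w → G.Adj w b → ¬(f a < f w ∧ f w < f b))
    (hk : 5 ≤ S.card) : S.card ≤ G.maxDeg + 2 := by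
  have hpos : ∀ s ∈ S, s ≠ a → s ≠ b → f a < f s ∧ f s < f b := by
    intro s hs h1 h2
    exact ⟨lt_of_le_of_ne (hmin s hs) (fun h => h1 (hinj h).symm),
      lt_of_le_of_ne (hmax s hs) (fun h => h2 (hinj h))⟩
  have XYlt : ∀ x y, isX G f a b x → isY G f a b y → f x < f y := by
    rintro x y ⟨hax, hx1, hx2⟩ ⟨hby, hy1, hy2⟩
    rcases lt_trichotomy (f x) (f y) with h | h | h
    · exact h
    · cases hinj h
      exact absurd ⟨hx1, hx2⟩ (hno x hax hby.symm)
    · exact (ncx hnc hax hby.symm hy1 h hx2).elim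
  have aconn : ∀ s ∈ S, s ≠ a → s ≠ b →
      (isX G f a b s ∨ (∃ x, isX G f a b x ∧ G.Adj x s) ∨ G.Adj m s) := by
    intro s hs hsa hsb
    obtain ⟨hfa, hfb⟩ := hpos s hs hsa hsb
    rcases hS s hs a ha hsa with hadj | ⟨w, hsw, hwa⟩
    · exact Or.inl ⟨hadj.symm, hfa, hfb⟩
    · rcases lt_trichotomy (f w) (f a) with hw | hw | hw
      · rcases lt_trichotomy (f w) (f m) with hw2 | hw2 | hw2
        · exact (ncx hnc hsw.symm hmb hw2 (hm.trans hfa) hfb).elim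
        · cases hinj hw2; exact Or.inr (Or.inr hsw.symm)
        · exact (ncx hnc ham.symm hsw.symm hw2 hw hfa).elim
      · cases hinj hw; exact (G.irrefl hwa).elim
      · rcases lt_trichotomy (f w) (f b) with hw2 | hw2 | hw2
        · exact Or.inr (Or.inl ⟨w, ⟨hwa.symm, hw, hw2⟩, hsw.symm⟩)
        · cases hinj hw2; exact absurd hwa.symm hnab
        · exact (ncx hnc hmb hsw (hm.trans hfa) hfb hw2).elim
  have bconn : ∀ s ∈ S, s ≠ a → s ≠ b →
      (isY G f a b s ∨ (∃ y, isY G f a b y ∧ G.Adj y s) ∨ G.Adj m s) := by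
    intro s hs hsa hsb
    obtain ⟨hfa, hfb⟩ := hpos s hs hsa hsb
    rcases hS s hs b hb hsb with hadj | ⟨w, hsw, hwb⟩
    · exact Or.inl ⟨hadj.symm, hfa, hfb⟩
    · rcases lt_trichotomy (f w) (f a) with hw | hw | hw
      · rcases lt_trichotomy (f w) (f m) with hw2 | hw2 | hw2
        · exact (ncx hnc hsw.symm hmb hw2 (hm.trans hfa) hfb).elim
        · cases hinj hw2; exact Or.inr (Or.inr hsw.symm)
        · exact (ncx hnc ham.symm hwb hw2 hw hfab).elim
      · cases hinj hw; exact absurd hwb hnab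
      · rcases lt_trichotomy (f w) (f b) with hw2 | hw2 | hw2
        · exact Or.inr (Or.inl ⟨w, ⟨hwb.symm, hw, hw2⟩, hsw.symm⟩)
        · cases hinj hw2; exact (G.irrefl hwb).elim
        · exact (ncx hnc hmb hsw (hm.trans hfa) hfb hw2).elim
  have xfact : ∀ x ∈ S, isX G f a b x →
      (∀ x₂, isX G f a b x₂ → f x₂ ≤ f x) ∧
      ((∃ w, isY G f a b w ∧ G.Adj x w ∧ (∀ y, isY G f a b y → f w ≤ f y)) ∨ G.Adj m x) := by
    intro x hxS hx
    obtain ⟨hax, hx1, hx2⟩ := hx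
    have hxb : x ≠ b := fun h => by subst h; omega
    rcases hS x hxS b hb hxb with hadj | ⟨w, hxw, hwb⟩
    · exact absurd ⟨hx1, hx2⟩ (hno x hax hadj)
    · rcases lt_trichotomy (f w) (f a) with hw | hw | hw
      · rcases lt_trichotomy (f w) (f m) with hw2 | hw2 | hw2
        · exact (ncx hnc hxw.symm hmb hw2 (hm.trans hx1) hx2).elim
        · cases hinj hw2
          constructor
          · intro x₂ hx₂
            by_contra hlt
            push_neg at hlt
            exact ncx hnc hxw.symm hx₂.1 hw hx1 hlt
          · exact Or.inr hxw.symm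
        · exact (ncx hnc ham.symm hxw.symm hw2 hw hx1).elim
      · cases hinj hw; exact absurd hwb hnab
      · rcases lt_trichotomy (f w) (f b) with hw2 | hw2 | hw2
        · have hwY : isY G f a b w := ⟨hwb.symm, hw, hw2⟩
          constructor
          · intro x₂ hx₂
            by_contra hlt
            push_neg at hlt
            exact ncx hnc hx₂.1 hxw hx1 hlt (XYlt x₂ w hx₂ hwY)
          · refine Or.inl ⟨w, hwY, hxw, ?_⟩
            intro y hy
            by_contra hlt
            push_neg at hlt
            exact ncx hnc hxw hy.1.symm (XYlt x y ⟨hax, hx1, hx2⟩ hy) hlt hw2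
        · cases hinj hw2; exact (G.irrefl hwb).elim
        · exact (ncx hnc hmb hxw (hm.trans hx1) hx2 hw2).elim
  have yfact : ∀ y ∈ S, isY G f a b y →
      (∀ y₂, isY G f a b y₂ → f y ≤ f y₂) ∧
      ((∃ x, isX G f a b x ∧ G.Adj x y ∧ (∀ x₂, isX G f a b x₂ → f x₂ ≤ f x)) ∨ G.Adj m y) := by
    intro y hyS hy
    obtain ⟨hby, hy1, hy2⟩ := hy
    have hya : y ≠ a := fun h => by subst h; omega
    have hyb : y ≠ b := fun h => by subst h; omega
    rcases aconn y hyS hya hyb with hX | ⟨x, hx, hxy⟩ | hmy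
    · exact absurd ⟨hy1, hy2⟩ (hno y hX.1 hby.symm)
    · constructor
      · intro y₂ hy₂
        by_contra hlt
        push_neg at hlt
        exact ncx hnc hxy hy₂.1.symm (XYlt x y₂ hx hy₂) hlt hy2
      · refine Or.inl ⟨x, hx, hxy, ?_⟩
        intro x₂ hx₂
        by_contra hlt
        push_neg at hlt
        exact ncx hnc hx₂.1 hxy hx.2.1 hlt (XYlt x₂ y hx₂ ⟨hby, hy1, hy2⟩)
    · constructor
      · intro y₂ hy₂
        by_contra hlt
        push_neg at hlt
        exact ncx hnc hmy hy₂.1.symm (hm.trans hy₂.2.1) hlt hy2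
      · exact Or.inr hmy
  have tmfact : ∀ t ∈ S, t ≠ a → t ≠ b → ¬isX G f a b t → ¬isY G f a b t → G.Adj m t →
      (∀ x₂, isX G f a b x₂ → f x₂ < f t) ∧ (∀ y₂, isY G f a b y₂ → f t < f y₂) := by
    intro t htS hta htb hnX hnY hmt
    obtain ⟨hta', htb'⟩ := hpos t htS hta htb
    constructor
    · intro x₂ hx₂
      rcases lt_trichotomy (f x₂) (f t) with h | h | h
      · exact h
      · cases hinj h; exact absurd hx₂ hnX
      · exact (ncx hnc hmt hx₂.1 hm hta' h).elim
    · intro y₂ hy₂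
      rcases lt_trichotomy (f t) (f y₂) with h | h | h
      · exact h
      · cases hinj h; exact absurd hy₂ hnY
      · exact (ncx hnc hmt hy₂.1.symm (hm.trans hy₂.2.1) h htb').elim
  have tpfact : ∀ t ∈ S, t ≠ a → t ≠ b → ¬isX G f a b t → ¬isY G f a b t → ¬G.Adj m t →
      ∃ xg yg, isX G f a b xg ∧ G.Adj xg t ∧ isY G f a b yg ∧ G.Adj yg t ∧
        (∀ x₂, isX G f a b x₂ → f x₂ < f t ∧ f x₂ ≤ f xg) ∧
        (∀ y₂, isY G f a b y₂ → f t < f y₂ ∧ f yg ≤ f y₂) := by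
    intro t htS hta htb hnX hnY hnmt
    obtain ⟨hta', htb'⟩ := hpos t htS hta htb
    rcases aconn t htS hta htb with h | ⟨xg, hxg, hxgt⟩ | h
    · exact absurd h hnX
    swap
    · exact absurd h hnmt
    rcases bconn t htS hta htb with h | ⟨yg, hyg, hygt⟩ | h
    · exact absurd h hnY
    swap
    · exact absurd h hnmt
    have hi : ∀ x₂, isX G f a b x₂ → f x₂ < f t := by
      intro x₂ hx₂
      rcases lt_trichotomy (f x₂) (f t) with h | h | h
      · exact h
      · cases hinj h; exact absurd hx₂ hnX
      · exact (ncx hnc hx₂.1 hygt.symm hta' h (XYlt x₂ yg hx₂ hyg)).elim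
    have hii : ∀ y₂, isY G f a b y₂ → f t < f y₂ := by
      intro y₂ hy₂
      rcases lt_trichotomy (f t) (f y₂) with h | h | h
      · exact h
      · cases hinj h; exact absurd hy₂ hnY
      · exact (ncx hnc hxgt hy₂.1.symm (XYlt xg y₂ hxg hy₂) h htb').elim
    have hiii : ∀ x₂, isX G f a b x₂ → f x₂ ≤ f xg := by
      intro x₂ hx₂
      by_contra hlt
      push_neg at hlt
      exact ncx hnc hx₂.1 hxgt hxg.2.1 hlt (hi x₂ hx₂)
    have hiv : ∀ y₂, isY G f a b y₂ → f yg ≤ f y₂ := by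
      intro y₂ hy₂
      by_contra hlt
      push_neg at hlt
      exact ncx hnc hygt.symm hy₂.1.symm (hii y₂ hy₂) hlt hyg.2.2
    exact ⟨xg, yg, hxg, hxgt, hyg, hygt,
      fun x₂ hx₂ => ⟨hi x₂ hx₂, hiii x₂ hx₂⟩, fun y₂ hy₂ => ⟨hii y₂ hy₂, hiv y₂ hy₂⟩⟩
  have hab_ne : a ≠ b := fun h => by subst h; omega
  -- Branch on whether some gate class is empty
  by_cases hX0 : ∀ x, ¬ isX G f a b x
  · have h2 := deg_le_maxDeg (G := G) m
    have h1 : S.card ≤ G.deg m := by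
      apply count0
      intro s hs
      by_cases hsa : s = a
      · subst hsa; exact ham.symm
      by_cases hsb : s = b
      · subst hsb; exact hmb
      rcases aconn s hs hsa hsb with h | ⟨x, hx, _⟩ | h
      · exact absurd h (hX0 s)
      · exact absurd hx (hX0 x)
      · exact h
    omega
  by_cases hY0 : ∀ y, ¬ isY G f a b y
  · have h2 := deg_le_maxDeg (G := G) m
    have h1 : S.card ≤ G.deg m := by
      apply count0
      intro s hs
      by_cases hsa : s = a
      · subst hsa; exact ham.symm
      by_cases hsb : s = b
      · subst hsb; exact hmb
      rcases bconn s hs hsa hsb with h | ⟨y, hy, _⟩ | h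
      · exact absurd h (hY0 s)
      · exact absurd hy (hY0 y)
      · exact h
    omega
  by_cases htm : ∃ t ∈ S, t ≠ a ∧ t ≠ b ∧ ¬isX G f a b t ∧ ¬isY G f a b t ∧ G.Adj m t
  · -- a T-vertex adjacent to m exists: everything is adjacent to m
    obtain ⟨tm, htmS, htma, htmb, htmX, htmY, hmtm⟩ := htm
    obtain ⟨htm1, htm2⟩ := tmfact tm htmS htma htmb htmX htmY hmtm
    obtain ⟨htma', htmb'⟩ := hpos tm htmS htma htmb
    have h2 := deg_le_maxDeg (G := G) m
    have h1 : S.card ≤ G.deg m := by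
      apply count0
      intro s hs
      by_cases hsa : s = a
      · subst hsa; exact ham.symm
      by_cases hsb : s = b
      · subst hsb; exact hmb
      obtain ⟨hsa', hsb'⟩ := hpos s hs hsa hsb
      by_cases hsX : isX G f a b s
      · rcases (xfact s hs hsX).2 with ⟨w, hwY, hsw, _⟩ | h
        · exact (ncx hnc hmtm hsw (hm.trans hsX.2.1) (htm1 s hsX) (htm2 w hwY)).elim
        · exact h
      by_cases hsY : isY G f a b s
      · rcases (yfact s hs hsY).2 with ⟨x, hxX, hxs, _⟩ | h
        · exact (ncx hnc hmtm hxs (hm.trans hxX.2.1) (htm1 x hxX) (htm2 s hsY)).elim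
        · exact h
      by_contra hnms
      obtain ⟨xg, yg, hxg, hxgt, hyg, hygt, hxf, hyf⟩ :=
        tpfact s hs hsa hsb hsX hsY hnms
      rcases lt_trichotomy (f s) (f tm) with h | h | h
      · exact ncx hnc hmtm hygt.symm (hm.trans hsa') h (htm2 yg hyg)
      · cases hinj h; exact hnms hmtm
      · exact ncx hnc hmtm hxgt (hm.trans hxg.2.1) (htm1 xg hxg) h
    omega
  · push_neg at htm
    have uniqX : ∀ u ∈ S, isX G f a b u → ∀ v ∈ S, isX G f a b v → u = v := by
      intro u hu hXu v hv hXv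
      exact hinj (le_antisymm ((xfact v hv hXv).1 u hXu) ((xfact u hu hXu).1 v hXv))
    have uniqY : ∀ u ∈ S, isY G f a b u → ∀ v ∈ S, isY G f a b v → u = v := by
      intro u hu hYu v hv hYv
      exact hinj (le_antisymm ((yfact u hu hYu).1 v hYv) ((yfact v hv hYv).1 u hYu))
    have uniqT : ∀ u ∈ S, u ≠ a → u ≠ b → ¬isX G f a b u → ¬isY G f a b u →
        ∀ v ∈ S, v ≠ a → v ≠ b → ¬isX G f a b v → ¬isY G f a b v → u = v := by
      intro u hu hua hub hXu hYu v hv hva hvb hXv hYv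
      obtain ⟨xgu, ygu, hxgu, hxgut, hygu, hygut, hxfu, hyfu⟩ :=
        tpfact u hu hua hub hXu hYu (htm u hu hua hub hXu hYu)
      obtain ⟨xgv, ygv, hxgv, hxgvt, hygv, hygvt, hxfv, hyfv⟩ :=
        tpfact v hv hva hvb hXv hYv (htm v hv hva hvb hXv hYv)
      have hex : xgu = xgv := hinj (le_antisymm ((hxfv xgu hxgu).2) ((hxfu xgv hxgv).2))
      have hey : ygu = ygv := hinj (le_antisymm ((hyfu ygv hygv).2) ((hyfv ygu hygu).2))
      subst hex
      subst hey
      exact middle_unique hnc hinj hxgut hygut.symm hxgvt hygvt.symm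
        (hxfu xgu hxgu).1 (hyfu ygu hygu).1 (hxfv xgu hxgu).1 (hyfv ygu hygu).1
    have final : ∀ x0 ∈ S, isX G f a b x0 → ∀ y0 ∈ S, isY G f a b y0 →
        ∀ t0 ∈ S, t0 ≠ a → t0 ≠ b → ¬isX G f a b t0 → ¬isY G f a b t0 →
        S.card ≤ G.maxDeg + 2 := by
      intro x0 hx0S hx0 y0 hy0S hy0 t0 ht0S ht0a ht0b ht0X ht0Y
      obtain ⟨xg, yg, hxg, hxgt, hyg, hygt, hxf, hyf⟩ :=
        tpfact t0 ht0S ht0a ht0b ht0X ht0Y (htm t0 ht0S ht0a ht0b ht0X ht0Y)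
      have hsub : S.card ≤ 5 := by
        apply count5 (u1 := a) (u2 := b) (u3 := x0) (u4 := y0) (u5 := t0)
        intro s hs
        by_cases h1 : s = a
        · exact Or.inl h1
        by_cases h2 : s = b
        · exact Or.inr (Or.inl h2)
        by_cases h3 : isX G f a b s
        · exact Or.inr (Or.inr (Or.inl (uniqX s hs h3 x0 hx0S hx0)))
        by_cases h4 : isY G f a b s
        · exact Or.inr (Or.inr (Or.inr (Or.inl (uniqY s hs h4 y0 hy0S hy0))))
        · exact Or.inr (Or.inr (Or.inr (Or.inr
            (uniqT s hs h1 h2 h3 h4 t0 ht0S ht0a ht0b ht0X ht0Y))))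
      have hdelta : 3 ≤ G.maxDeg := by
        rcases (yfact y0 hy0S hy0).2 with ⟨x, hxX, hxy0, hxmax⟩ | hmy0
        · have hxeq : x = xg := hinj (le_antisymm (hxmax xg hxg) ((hxf x hxX).2)).symm
          subst hxeq
          refine le_trans (deg_ge_three (g := x) hxX.1.symm hxgt hxy0
            (Ne.symm ht0a) ?_ ?_) (deg_le_maxDeg (G := G) x)
          · exact fun h => by have h2 := hy0.2.1; rw [← h] at h2; omega
          · exact fun h => by
              have h2 := (hyf y0 hy0).1
              rw [h] at h2
              omega
        · refine le_trans (deg_ge_three (g := m) ham.symm hmb hmy0 hab_ne ?_ ?_)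
            (deg_le_maxDeg (G := G) m)
          · exact fun h => by have h2 := hy0.2.1; rw [← h] at h2; omega
          · exact fun h => by have h2 := hy0.2.2; rw [← h] at h2; omega
      omega
    have hcard3 : 2 < ((S.erase a).erase b).card := by
      have h1 : (S.erase a).card = S.card - 1 := Finset.card_erase_of_mem ha
      have hbmem : b ∈ S.erase a := Finset.mem_erase.2 ⟨hab_ne.symm, hb⟩
      have h2 : ((S.erase a).erase b).card = (S.erase a).card - 1 :=
        Finset.card_erase_of_mem hbmem
      omega
    obtain ⟨s1, s2, s3, hm1, hm2, hm3, d12, d13, d23⟩ := Finset.two_lt_card_iff.1 hcard3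
    obtain ⟨h1b, h1a, hS1⟩ :
        s1 ≠ b ∧ s1 ≠ a ∧ s1 ∈ S := by
      obtain ⟨hx, hy⟩ := Finset.mem_erase.1 hm1
      obtain ⟨hz, hw⟩ := Finset.mem_erase.1 hy
      exact ⟨hx, hz, hw⟩
    obtain ⟨h2b, h2a, hS2⟩ :
        s2 ≠ b ∧ s2 ≠ a ∧ s2 ∈ S := by
      obtain ⟨hx, hy⟩ := Finset.mem_erase.1 hm2
      obtain ⟨hz, hw⟩ := Finset.mem_erase.1 hy
      exact ⟨hx, hz, hw⟩
    obtain ⟨h3b, h3a, hS3⟩ :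
        s3 ≠ b ∧ s3 ≠ a ∧ s3 ∈ S := by
      obtain ⟨hx, hy⟩ := Finset.mem_erase.1 hm3
      obtain ⟨hz, hw⟩ := Finset.mem_erase.1 hy
      exact ⟨hx, hz, hw⟩
    have cls : ∀ s, (isX G f a b s ∨ isY G f a b s ∨ (¬isX G f a b s ∧ ¬isY G f a b s)) := by
      intro s
      by_cases h : isX G f a b s
      · exact Or.inl h
      by_cases h' : isY G f a b s
      · exact Or.inr (Or.inl h')
      · exact Or.inr (Or.inr ⟨h, h'⟩)
    rcases cls s1 with c1 | c1 | c1 <;> rcases cls s2 with c2 | c2 | c2 <;>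
      rcases cls s3 with c3 | c3 | c3 <;>
      first
      | exact absurd (uniqX s1 hS1 c1 s2 hS2 c2) d12
      | exact absurd (uniqX s1 hS1 c1 s3 hS3 c3) d13
      | exact absurd (uniqX s2 hS2 c2 s3 hS3 c3) d23
      | exact absurd (uniqY s1 hS1 c1 s2 hS2 c2) d12
      | exact absurd (uniqY s1 hS1 c1 s3 hS3 c3) d13
      | exact absurd (uniqY s2 hS2 c2 s3 hS3 c3) d23
      | exact absurd (uniqT s1 hS1 h1a h1b c1.1 c1.2 s2 hS2 h2a h2b c2.1 c2.2) d12
      | exact absurd (uniqT s1 hS1 h1a h1b c1.1 c1.2 s3 hS3 h3a h3b c3.1 c3.2) d13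
      | exact absurd (uniqT s2 hS2 h2a h2b c2.1 c2.2 s3 hS3 h3a h3b c3.1 c3.2) d23
      | exact final s1 hS1 c1 s2 hS2 c2 s3 hS3 h3a h3b c3.1 c3.2
      | exact final s1 hS1 c1 s3 hS3 c3 s2 hS2 h2a h2b c2.1 c2.2
      | exact final s2 hS2 c2 s1 hS1 c1 s3 hS3 h3a h3b c3.1 c3.2
      | exact final s2 hS2 c2 s3 hS3 c3 s1 hS1 h1a h1b c1.1 c1.2
      | exact final s3 hS3 c3 s1 hS1 c1 s2 hS2 h2a h2b c2.1 c2.2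
      | exact final s3 hS3 c3 s2 hS2 c2 s1 hS1 h1a h1b c1.1 c1.2


end Case3


section Case1

variable [Fintype V] {S : Finset V} {a b : V}

lemma count4 {S : Finset V} {u1 u2 u3 u4 : V}
    (h : ∀ s ∈ S, s = u1 ∨ s = u2 ∨ s = u3 ∨ s = u4) : S.card ≤ 4 := by
  classical
  have hsub : S ⊆ insert u1 (insert u2 (insert u3 {u4})) := by
    intro s hs
    rcases h s hs with rfl | rfl | rfl | rfl <;> simp
  have h1 := Finset.card_le_card hsub
  have h2 := Finset.card_insert_le u1 (insert u2 (insert u3 ({u4} : Finset V)))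
  have h3 := Finset.card_insert_le u2 (insert u3 ({u4} : Finset V))
  have h4 := Finset.card_insert_le u3 ({u4} : Finset V)
  have h6 : ({u4} : Finset V).card = 1 := Finset.card_singleton _
  omega

lemma case1 (hconn : G.Connected) (hnc : NC G f) (hinj : Function.Injective f) (hS : SqC G S)
    (ha : a ∈ S) (hb : b ∈ S)
    (hmin : ∀ s ∈ S, f a ≤ f s) (hmax : ∀ s ∈ S, f s ≤ f b) (hfab : f a < f b)
    (hadj : G.Adj a b) (hk : 5 ≤ S.card) (hD2 : 2 ≤ G.maxDeg) :
    S.card ≤ G.maxDeg + 2 ∨ Nonempty (G ≃g cycleGraph 5) := by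
  have nef : ∀ {u v : V}, f u < f v → u ≠ v := by
    intro u v h he
    cases he
    exact absurd h (lt_irrefl _)
  have hpos : ∀ s ∈ S, s ≠ a → s ≠ b → f a < f s ∧ f s < f b := by
    intro s hs h1 h2
    exact ⟨lt_of_le_of_ne (hmin s hs) (fun h => h1 (hinj h).symm),
      lt_of_le_of_ne (hmax s hs) (fun h => h2 (hinj h))⟩
  have XYle : ∀ x y, isX G f a b x → isY G f a b y → f x ≤ f y := by
    rintro x y ⟨hax, hx1, hx2⟩ ⟨hby, hy1, hy2⟩
    by_contra hlt
    push_neg at hlt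
    exact ncx hnc hax hby.symm hy1 hlt hx2
  have aconn : ∀ s ∈ S, s ≠ a → s ≠ b →
      (isX G f a b s ∨ isY G f a b s ∨ ∃ x, isX G f a b x ∧ G.Adj x s) := by
    intro s hs hsa hsb
    obtain ⟨hfa, hfb⟩ := hpos s hs hsa hsb
    rcases hS s hs a ha hsa with hadj' | ⟨w, hsw, hwa⟩
    · exact Or.inl ⟨hadj'.symm, hfa, hfb⟩
    · rcases lt_trichotomy (f w) (f a) with hw | hw | hw
      · exact (ncx hnc hsw.symm hadj hw hfa hfb).elim
      · cases hinj hw; exact (G.irrefl hwa).elim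
      · rcases lt_trichotomy (f w) (f b) with hw2 | hw2 | hw2
        · exact Or.inr (Or.inr ⟨w, ⟨hwa.symm, hw, hw2⟩, hsw.symm⟩)
        · cases hinj hw2; exact Or.inr (Or.inl ⟨hsw.symm, hfa, hfb⟩)
        · exact (ncx hnc hadj hsw hfa hfb hw2).elim
  have bconn : ∀ s ∈ S, s ≠ a → s ≠ b →
      (isX G f a b s ∨ isY G f a b s ∨ ∃ y, isY G f a b y ∧ G.Adj y s) := by
    intro s hs hsa hsb
    obtain ⟨hfa, hfb⟩ := hpos s hs hsa hsb
    rcases hS s hs b hb hsb with hadj' | ⟨w, hsw, hwb⟩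
    · exact Or.inr (Or.inl ⟨hadj'.symm, hfa, hfb⟩)
    · rcases lt_trichotomy (f w) (f b) with hw | hw | hw
      · rcases lt_trichotomy (f w) (f a) with hw2 | hw2 | hw2
        · exact (ncx hnc hsw.symm hadj hw2 hfa hfb).elim
        · cases hinj hw2; exact Or.inl ⟨hsw.symm, hfa, hfb⟩
        · exact Or.inr (Or.inr ⟨w, ⟨hwb.symm, hw2, hw⟩, hsw.symm⟩)
      · cases hinj hw; exact (G.irrefl hwb).elim
      · exact (ncx hnc hadj hsw hfa hfb hw).elim
  have fp : ∀ x y z, (G.Adj x y ∨ ∃ w, G.Adj x w ∧ G.Adj w y) → G.Adj a z →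
      f a < f x → f x < f z → f z < f y → f y < f b → ¬G.Adj a y → ¬G.Adj z y → False := by
    intro x y z hsq haz o1 o2 o3 o4 hay hzy
    rcases hsq with he | ⟨w, hxw, hwy⟩
    · exact ncx hnc haz he o1 o2 o3
    · rcases lt_trichotomy (f w) (f z) with hw | hw | hw
      · rcases lt_trichotomy (f w) (f a) with hw2 | hw2 | hw2
        · exact ncx hnc hwy hadj hw2 ((o1.trans o2).trans o3) o4
        · cases hinj hw2; exact hay hwy
        · exact ncx hnc haz hwy hw2 hw o3
      · cases hinj hw; exact hzy hwy
      · exact ncx hnc haz hxw o1 o2 hw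
  have fpm : ∀ x y z, (G.Adj x y ∨ ∃ w, G.Adj x w ∧ G.Adj w y) → G.Adj b z →
      f a < f x → f x < f z → f z < f y → f y < f b → ¬G.Adj b x → ¬G.Adj z x → False := by
    intro x y z hsq hbz o1 o2 o3 o4 hbx hzx
    rcases hsq with he | ⟨w, hxw, hwy⟩
    · exact ncx hnc he hbz.symm o2 o3 o4
    · rcases lt_trichotomy (f w) (f z) with hw | hw | hw
      · exact ncx hnc hwy hbz.symm hw o3 o4
      · cases hinj hw; exact hzx hxw.symm
      · rcases lt_trichotomy (f w) (f b) with hw2 | hw2 | hw2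
        · exact ncx hnc hxw hbz.symm o2 hw hw2
        · cases hinj hw2; exact hbx hxw.symm
        · exact ncx hnc hadj hxw o1 ((o2.trans o3).trans o4) hw2
  by_cases hT : ∃ t ∈ S, t ≠ a ∧ t ≠ b ∧ ¬isX G f a b t ∧ ¬isY G f a b t
  swap
  · -- no middle vertices: S consists of a, b, gates of a, gates of b
    left
    push_neg at hT
    by_cases hA1 : ∃ y1 ∈ S, ∃ y2 ∈ S,
        ((isY G f a b y1 ∧ ¬isX G f a b y1) ∧ (isY G f a b y2 ∧ ¬isX G f a b y2) ∧ y1 ≠ y2)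
    swap
    · -- pure-Y elements of S are subsingleton: count via a
      push_neg at hA1
      obtain ⟨yr, hyr⟩ : ∃ yr, ∀ s ∈ S, (isY G f a b s ∧ ¬isX G f a b s) → s = yr := by
        rcases em (∃ y ∈ S, isY G f a b y ∧ ¬isX G f a b y) with ⟨yr, hyrS, hyrP⟩ | hnone
        · exact ⟨yr, fun s hs hp => hA1 s hs yr hyrS hp hyrP⟩
        · exact ⟨a, fun s hs hp => absurd ⟨s, hs, hp⟩ hnone⟩
      have h1 : S.card ≤ G.deg a + 2 := by
        apply count2 (u := a) (v := yr)
        intro s hs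
        by_cases hsa : s = a
        · exact Or.inl hsa
        by_cases hsb : s = b
        · subst hsb; exact Or.inr (Or.inr hadj)
        by_cases hsX : isX G f a b s
        · exact Or.inr (Or.inr hsX.1)
        · exact Or.inr (Or.inl (hyr s hs ⟨hT s hs hsa hsb hsX, hsX⟩))
      have h2 := deg_le_maxDeg (G := G) a
      omega
    · by_cases hA2 : ∃ x1 ∈ S, ∃ x2 ∈ S,
          ((isX G f a b x1 ∧ ¬isY G f a b x1) ∧ (isX G f a b x2 ∧ ¬isY G f a b x2) ∧ x1 ≠ x2)
      swap
      · -- pure-X subsingleton: count via b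
        push_neg at hA2
        obtain ⟨xr, hxr⟩ : ∃ xr, ∀ s ∈ S, (isX G f a b s ∧ ¬isY G f a b s) → s = xr := by
          rcases em (∃ x ∈ S, isX G f a b x ∧ ¬isY G f a b x) with ⟨xr, hxrS, hxrP⟩ | hnone
          · exact ⟨xr, fun s hs hp => hA2 s hs xr hxrS hp hxrP⟩
          · exact ⟨a, fun s hs hp => absurd ⟨s, hs, hp⟩ hnone⟩
        have h1 : S.card ≤ G.deg b + 2 := by
          apply count2 (u := b) (v := xr)
          intro s hs
          by_cases hsb : s = b
          · exact Or.inl hsb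
          by_cases hsa : s = a
          · subst hsa; exact Or.inr (Or.inr hadj.symm)
          by_cases hsY : isY G f a b s
          · exact Or.inr (Or.inr hsY.1)
          by_cases hsX : isX G f a b s
          · exact Or.inr (Or.inl (hxr s hs ⟨hsX, hsY⟩))
          · exact absurd (hT s hs hsa hsb hsX) hsY
        have h2 := deg_le_maxDeg (G := G) b
        omega
      · -- two pure-X and two pure-Y elements: contradiction via fp
        exfalso
        obtain ⟨y1, hy1S, y2, hy2S, hy1P, hy2P, hy12⟩ := hA1
        obtain ⟨x1, hx1S, x2, hx2S, hx1P, hx2P, hx12⟩ := hA2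
        -- order them
        have key : ∀ u1 ∈ S, ∀ u2 ∈ S, (isX G f a b u1 ∧ ¬isY G f a b u1) →
            (isX G f a b u2 ∧ ¬isY G f a b u2) → f u1 < f u2 →
            ∀ w1 ∈ S, ∀ w2 ∈ S, (isY G f a b w1 ∧ ¬isX G f a b w1) →
            (isY G f a b w2 ∧ ¬isX G f a b w2) → f w1 < f w2 → False := by
          intro u1 hu1 u2 hu2 hu1P hu2P hult w1 hw1 w2 hw2 hw1P hw2P hwlt
          have o3 : f u2 < f w2 :=
            lt_of_le_of_ne (XYle u2 w2 hu2P.1 hw2P.1)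
              (fun h => hu2P.2 (by rw [hinj h]; exact hw2P.1))
          have o3' : f u2 < f w1 :=
            lt_of_le_of_ne (XYle u2 w1 hu2P.1 hw1P.1)
              (fun h => hu2P.2 (by rw [hinj h]; exact hw1P.1))
          refine fp u1 w2 u2 (hS u1 hu1 w2 hw2 (nef (hult.trans o3))) hu2P.1.1
            hu1P.1.2.1 hult o3 hw2P.1.2.2 ?_ ?_
          · intro h
            exact hw2P.2 ⟨h, hw2P.1.2.1, hw2P.1.2.2⟩
          · intro h
            exact ncx hnc h hw1P.1.1.symm o3' hwlt hw2P.1.2.2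
        rcases lt_trichotomy (f x1) (f x2) with hx | hx | hx
        · rcases lt_trichotomy (f y1) (f y2) with hy | hy | hy
          · exact key x1 hx1S x2 hx2S hx1P hx2P hx y1 hy1S y2 hy2S hy1P hy2P hy
          · exact absurd (hinj hy) hy12
          · exact key x1 hx1S x2 hx2S hx1P hx2P hx y2 hy2S y1 hy1S hy2P hy1P hy
        · exact absurd (hinj hx) hx12
        · rcases lt_trichotomy (f y1) (f y2) with hy | hy | hy
          · exact key x2 hx2S x1 hx1S hx2P hx1P hx y1 hy1S y2 hy2S hy1P hy2P hy
          · exact absurd (hinj hy) hy12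
          · exact key x2 hx2S x1 hx1S hx2P hx1P hx y2 hy2S y1 hy1S hy2P hy1P hy
  · obtain ⟨t0, ht0S, ht0a, ht0b, ht0X, ht0Y⟩ := hT
    obtain ⟨ht0a', ht0b'⟩ := hpos t0 ht0S ht0a ht0b
    by_cases hc : ∃ c, isX G f a b c ∧ isY G f a b c
    · -- there is a common gate c
      left
      obtain ⟨c, hcX, hcY⟩ := hc
      have cmax : ∀ x, isX G f a b x → f x ≤ f c := fun x hx => XYle x c hx hcY
      have cmin : ∀ y, isY G f a b y → f c ≤ f y := fun y hy => XYle c y hcX hy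
      have cuniq : ∀ c', isX G f a b c' → isY G f a b c' → c' = c :=
        fun c' hx hy => hinj (le_antisymm (cmax c' hx) (cmin c' hy))
      have tadjc : ∀ t ∈ S, t ≠ a → t ≠ b → ¬isX G f a b t → ¬isY G f a b t → G.Adj t c := by
        intro t htS hta htb hnX hnY
        obtain ⟨hta', htb'⟩ := hpos t htS hta htb
        rcases lt_trichotomy (f t) (f c) with htc | htc | htc
        · rcases bconn t htS hta htb with h | h | ⟨yg', hyg', hygt'⟩
          · exact absurd h hnX
          · exact absurd h hnY
          · have hyc : yg' = c := by
              rcases lt_trichotomy (f yg') (f c) with h2 | h2 | h2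
              · exact absurd h2 (not_lt.2 (cmin yg' hyg'))
              · exact hinj h2
              · exact (ncx hnc hygt'.symm hcY.1.symm htc h2 hyg'.2.2).elim
            rw [← hyc]; exact hygt'.symm
        · cases hinj htc; exact absurd hcX hnX
        · rcases aconn t htS hta htb with h | h | ⟨xg', hxg', hxgt'⟩
          · exact absurd h hnX
          · exact absurd h hnY
          · have hxc : xg' = c := by
              rcases lt_trichotomy (f xg') (f c) with h2 | h2 | h2
              · exact (ncx hnc hcX.1 hxgt' hxg'.2.1 h2 htc).elim
              · exact hinj h2
              · exact absurd h2 (not_lt.2 (cmax xg' hxg'))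
            rw [← hxc]; exact hxgt'.symm
      have bigX : ∀ x1 ∈ S, isX G f a b x1 → x1 ≠ c → ∀ x2 ∈ S, isX G f a b x2 → x2 ≠ c →
          f x1 < f x2 → S.card ≤ G.maxDeg + 2 := by
        intro x1 hx1S hx1 hx1c x2 hx2S hx2 hx2c h12
        have hx2lt : f x2 < f c := lt_of_le_of_ne (cmax x2 hx2) (fun h => hx2c (hinj h))
        have hx1lt : f x1 < f c := h12.trans hx2lt
        have tbig : ∀ t ∈ S, t ≠ a → t ≠ b → ¬isX G f a b t → ¬isY G f a b t →
            f x2 < f t ∧ f t < f c ∧ G.Adj x2 t := by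
          intro t htS hta htb hnX hnY
          obtain ⟨hta', htb'⟩ := hpos t htS hta htb
          have htc : G.Adj t c := tadjc t htS hta htb hnX hnY
          have hne1t : x1 ≠ t := fun h => by rw [← h] at hnX; exact hnX hx1
          have htlt : f t < f c := by
            rcases lt_trichotomy (f t) (f c) with h | h | h
            · exact h
            · cases hinj h; exact absurd hcX hnX
            · exfalso
              rcases hS x1 hx1S t htS hne1t with he | ⟨w, h1w, hwt⟩
              · exact ncx hnc hcX.1 he hx1.2.1 hx1lt h
              · rcases lt_trichotomy (f w) (f c) with hw | hw | hw
                · rcases lt_trichotomy (f w) (f a) with hw2 | hw2 | hw2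
                  · exact ncx hnc hwt hadj hw2 hta' htb'
                  · cases hinj hw2; exact hnX ⟨hwt, hta', htb'⟩
                  · exact ncx hnc hcX.1 hwt hw2 hw h
                · cases hinj hw
                  exact ncx hnc hx2.1 h1w hx1.2.1 h12 hx2lt
                · exact ncx hnc hcX.1 h1w hx1.2.1 hx1lt hw
          have htgt : f x2 < f t := by
            rcases lt_trichotomy (f x2) (f t) with h | h | h
            · exact h
            · cases hinj h; exact absurd hx2 hnX
            · exact (ncx hnc hx2.1 htc hta' h hx2lt).elim
          refine ⟨htgt, htlt, ?_⟩
          rcases hS x1 hx1S t htS hne1t with he | ⟨w, h1w, hwt⟩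
          · exact (ncx hnc hx2.1 he hx1.2.1 h12 htgt).elim
          · rcases lt_trichotomy (f w) (f x2) with hw | hw | hw
            · rcases lt_trichotomy (f w) (f a) with hw2 | hw2 | hw2
              · exact (ncx hnc hwt hadj hw2 hta' htb').elim
              · cases hinj hw2; exact absurd ⟨hwt, hta', htb'⟩ hnX
              · exact (ncx hnc hx2.1 hwt hw2 hw htgt).elim
            · cases hinj hw; exact hwt
            · exact (ncx hnc hx2.1 h1w hx1.2.1 h12 hw).elim
        have sYc : ∀ y ∈ S, isY G f a b y → y = c := by
          intro y hyS hy
          by_contra hne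
          have hcy : f c < f y := lt_of_le_of_ne (cmin y hy) (fun h => hne (hinj h).symm)
          refine fp x1 y x2 (hS x1 hx1S y hyS (nef (h12.trans (hx2lt.trans hcy)))) hx2.1
            hx1.2.1 h12 (hx2lt.trans hcy) hy.2.2 ?_ ?_
          · intro h
            exact hne (cuniq y ⟨h, hy.2.1, hy.2.2⟩ hy)
          · intro h
            exact ncx hnc hcX.1 h hx2.2.1 hx2lt hcy
        obtain ⟨tr, htr⟩ : ∃ tr, ∀ s ∈ S, s ≠ a → s ≠ b →
            ¬isX G f a b s → ¬isY G f a b s → s = tr := by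
          rcases em (∃ t ∈ S, t ≠ a ∧ t ≠ b ∧ ¬isX G f a b t ∧ ¬isY G f a b t) with
            ⟨tr, htrS, htra, htrb, htrX, htrY⟩ | hnone
          · refine ⟨tr, fun s hs hsa hsb hsX hsY => ?_⟩
            obtain ⟨g1, g2, g3⟩ := tbig s hs hsa hsb hsX hsY
            obtain ⟨g1', g2', g3'⟩ := tbig tr htrS htra htrb htrX htrY
            exact middle_unique hnc hinj g3 (tadjc s hs hsa hsb hsX hsY) g3'
              (tadjc tr htrS htra htrb htrX htrY) g1 g2 g1' g2'
          · exact ⟨a, fun s hs hsa hsb hsX hsY => absurd ⟨s, hs, hsa, hsb, hsX, hsY⟩ hnone⟩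
        have h1 : S.card ≤ G.deg a + 2 := by
          apply count2 (u := a) (v := tr)
          intro s hs
          by_cases hsa : s = a
          · exact Or.inl hsa
          by_cases hsb : s = b
          · subst hsb; exact Or.inr (Or.inr hadj)
          by_cases hsX : isX G f a b s
          · exact Or.inr (Or.inr hsX.1)
          by_cases hsY : isY G f a b s
          · rw [sYc s hs hsY]; exact Or.inr (Or.inr hcX.1)
          · exact Or.inr (Or.inl (htr s hs hsa hsb hsX hsY))
        have h2 := deg_le_maxDeg (G := G) a
        omega
      have bigY : ∀ y1 ∈ S, isY G f a b y1 → y1 ≠ c → ∀ y2 ∈ S, isY G f a b y2 → y2 ≠ c →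
          f y2 < f y1 → S.card ≤ G.maxDeg + 2 := by
        intro y1 hy1S hy1 hy1c y2 hy2S hy2 hy2c h21
        have hy2gt : f c < f y2 := lt_of_le_of_ne (cmin y2 hy2) (fun h => hy2c (hinj h).symm)
        have hy1gt : f c < f y1 := hy2gt.trans h21
        have tbig : ∀ t ∈ S, t ≠ a → t ≠ b → ¬isX G f a b t → ¬isY G f a b t →
            f c < f t ∧ f t < f y2 ∧ G.Adj y2 t := by
          intro t htS hta htb hnX hnY
          obtain ⟨hta', htb'⟩ := hpos t htS hta htb
          have htc : G.Adj t c := tadjc t htS hta htb hnX hnY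
          have hne1t : y1 ≠ t := fun h => by rw [← h] at hnY; exact hnY hy1
          have htgt : f c < f t := by
            rcases lt_trichotomy (f c) (f t) with h | h | h
            · exact h
            · cases hinj h; exact absurd hcX hnX
            · exfalso
              rcases hS y1 hy1S t htS hne1t with he | ⟨w, h1w, hwt⟩
              · exact ncx hnc he.symm hcY.1.symm h hy1gt hy1.2.2
              · rcases lt_trichotomy (f w) (f c) with hw | hw | hw
                · exact ncx hnc h1w.symm hcY.1.symm hw hy1gt hy1.2.2
                · cases hinj hw
                  exact ncx hnc h1w.symm hy2.1.symm hy2gt h21 hy1.2.2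
                · rcases lt_trichotomy (f w) (f b) with hw2 | hw2 | hw2
                  · exact ncx hnc hwt.symm hcY.1.symm h hw hw2
                  · cases hinj hw2; exact hnY ⟨hwt, hta', htb'⟩
                  · exact ncx hnc hadj h1w hy1.2.1 hy1.2.2 hw2
          have htlt : f t < f y2 := by
            rcases lt_trichotomy (f t) (f y2) with h | h | h
            · exact h
            · cases hinj h; exact absurd hy2 hnY
            · exact (ncx hnc htc.symm hy2.1.symm hy2gt h htb').elim
          refine ⟨htgt, htlt, ?_⟩
          rcases hS y1 hy1S t htS hne1t with he | ⟨w, h1w, hwt⟩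
          · exact (ncx hnc he.symm hy2.1.symm htlt h21 hy1.2.2).elim
          · rcases lt_trichotomy (f w) (f y2) with hw | hw | hw
            · exact (ncx hnc h1w.symm hy2.1.symm hw h21 hy1.2.2).elim
            · cases hinj hw; exact hwt
            · rcases lt_trichotomy (f w) (f b) with hw2 | hw2 | hw2
              · exact (ncx hnc hwt.symm hy2.1.symm htlt hw hw2).elim
              · cases hinj hw2; exact absurd ⟨hwt, hta', htb'⟩ hnY
              · exact (ncx hnc hadj h1w hy1.2.1 hy1.2.2 hw2).elim
        have sXc : ∀ x ∈ S, isX G f a b x → x = c := by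
          intro x hxS hx
          by_contra hne
          have hxc : f x < f c := lt_of_le_of_ne (cmax x hx) (fun h => hne (hinj h))
          refine fpm x y1 y2 (hS x hxS y1 hy1S (nef ((hxc.trans hy2gt).trans h21))) hy2.1
            hx.2.1 (hxc.trans hy2gt) h21 hy1.2.2 ?_ ?_
          · intro h
            exact hne (cuniq x hx ⟨h, hx.2.1, hx.2.2⟩)
          · intro h
            exact ncx hnc h.symm hcY.1.symm hxc hy2gt hy2.2.2
        obtain ⟨tr, htr⟩ : ∃ tr, ∀ s ∈ S, s ≠ a → s ≠ b →
            ¬isX G f a b s → ¬isY G f a b s → s = tr := by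
          rcases em (∃ t ∈ S, t ≠ a ∧ t ≠ b ∧ ¬isX G f a b t ∧ ¬isY G f a b t) with
            ⟨tr, htrS, htra, htrb, htrX, htrY⟩ | hnone
          · refine ⟨tr, fun s hs hsa hsb hsX hsY => ?_⟩
            obtain ⟨g1, g2, g3⟩ := tbig s hs hsa hsb hsX hsY
            obtain ⟨g1', g2', g3'⟩ := tbig tr htrS htra htrb htrX htrY
            exact middle_unique hnc hinj (tadjc s hs hsa hsb hsX hsY).symm g3.symm
              (tadjc tr htrS htra htrb htrX htrY).symm g3'.symm g1 g2 g1' g2'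
          · exact ⟨a, fun s hs hsa hsb hsX hsY => absurd ⟨s, hs, hsa, hsb, hsX, hsY⟩ hnone⟩
        have h1 : S.card ≤ G.deg b + 2 := by
          apply count2 (u := b) (v := tr)
          intro s hs
          by_cases hsb : s = b
          · exact Or.inl hsb
          by_cases hsa : s = a
          · subst hsa; exact Or.inr (Or.inr hadj.symm)
          by_cases hsY : isY G f a b s
          · exact Or.inr (Or.inr hsY.1)
          by_cases hsX : isX G f a b s
          · rw [sXc s hs hsX]; exact Or.inr (Or.inr hcY.1)
          · exact Or.inr (Or.inl (htr s hs hsa hsb hsX hsY))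
        have h2 := deg_le_maxDeg (G := G) b
        omega
      by_cases hbx : ∃ x1 ∈ S, ∃ x2 ∈ S,
          ((isX G f a b x1 ∧ x1 ≠ c) ∧ (isX G f a b x2 ∧ x2 ≠ c) ∧ x1 ≠ x2)
      · obtain ⟨x1, hx1S, x2, hx2S, ⟨hx1X, hx1c⟩, ⟨hx2X, hx2c⟩, hne⟩ := hbx
        rcases lt_trichotomy (f x1) (f x2) with h | h | h
        · exact bigX x1 hx1S hx1X hx1c x2 hx2S hx2X hx2c h
        · exact absurd (hinj h) hne
        · exact bigX x2 hx2S hx2X hx2c x1 hx1S hx1X hx1c h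
      by_cases hby : ∃ y1 ∈ S, ∃ y2 ∈ S,
          ((isY G f a b y1 ∧ y1 ≠ c) ∧ (isY G f a b y2 ∧ y2 ≠ c) ∧ y1 ≠ y2)
      · obtain ⟨y1, hy1S, y2, hy2S, ⟨hy1Y, hy1c⟩, ⟨hy2Y, hy2c⟩, hne⟩ := hby
        rcases lt_trichotomy (f y1) (f y2) with h | h | h
        · exact bigY y2 hy2S hy2Y hy2c y1 hy1S hy1Y hy1c h
        · exact absurd (hinj h) hne
        · exact bigY y1 hy1S hy1Y hy1c y2 hy2S hy2Y hy2c h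
      push_neg at hbx hby
      obtain ⟨xr, hxr⟩ : ∃ xr, ∀ s ∈ S, isX G f a b s → s ≠ c → s = xr := by
        rcases em (∃ x ∈ S, isX G f a b x ∧ x ≠ c) with ⟨xr, hxrS, hxrX, hxrc⟩ | hnone
        · exact ⟨xr, fun s hs h1 h2 => hbx s hs xr hxrS ⟨h1, h2⟩ ⟨hxrX, hxrc⟩⟩
        · exact ⟨a, fun s hs h1 h2 => absurd ⟨s, hs, h1, h2⟩ hnone⟩
      obtain ⟨yr, hyr⟩ : ∃ yr, ∀ s ∈ S, isY G f a b s → s ≠ c → s = yr := by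
        rcases em (∃ y ∈ S, isY G f a b y ∧ y ≠ c) with ⟨yr, hyrS, hyrY, hyrc⟩ | hnone
        · exact ⟨yr, fun s hs h1 h2 => hby s hs yr hyrS ⟨h1, h2⟩ ⟨hyrY, hyrc⟩⟩
        · exact ⟨a, fun s hs h1 h2 => absurd ⟨s, hs, h1, h2⟩ hnone⟩
      by_cases hLR : f t0 < f c
      · have c1 : ∀ y ∈ S, isY G f a b y → y ≠ c → G.Adj c y := by
          intro y hyS hy hyne
          have hcy : f c < f y := lt_of_le_of_ne (cmin y hy) (fun h => hyne (hinj h).symm)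
          have hne : t0 ≠ y := nef (hLR.trans hcy)
          rcases hS t0 ht0S y hyS hne with he | ⟨w, htw, hwy⟩
          · exact (ncx hnc hcX.1 he ht0a' hLR hcy).elim
          · rcases lt_trichotomy (f w) (f c) with hw | hw | hw
            · rcases lt_trichotomy (f w) (f a) with hw2 | hw2 | hw2
              · exact (ncx hnc hwy hadj hw2 hy.2.1 hy.2.2).elim
              · cases hinj hw2
                exact absurd (cuniq y ⟨hwy, hy.2.1, hy.2.2⟩ hy) hyne
              · exact (ncx hnc hcX.1 hwy hw2 hw hcy).elim
            · cases hinj hw; exact hwy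
            · exact (ncx hnc hcX.1 htw ht0a' hLR hw).elim
        have h1 : S.card ≤ G.deg c + 2 := by
          apply count2 (u := c) (v := xr)
          intro s hs
          by_cases hsc : s = c
          · exact Or.inl hsc
          right
          by_cases hsa : s = a
          · subst hsa; exact Or.inr hcX.1.symm
          by_cases hsb : s = b
          · subst hsb; exact Or.inr hcY.1.symm
          by_cases hsX : isX G f a b s
          · exact Or.inl (hxr s hs hsX hsc)
          by_cases hsY : isY G f a b s
          · exact Or.inr (c1 s hs hsY hsc)
          · exact Or.inr (tadjc s hs hsa hsb hsX hsY).symm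
        have h2 := deg_le_maxDeg (G := G) c
        omega
      · have hLR' : f c < f t0 := by
          rcases lt_trichotomy (f c) (f t0) with h | h | h
          · exact h
          · cases hinj h; exact absurd hcX ht0X
          · exact absurd h hLR
        have c1m : ∀ x ∈ S, isX G f a b x → x ≠ c → G.Adj c x := by
          intro x hxS hx hxne
          have hxc : f x < f c := lt_of_le_of_ne (cmax x hx) (fun h => hxne (hinj h))
          have hne : t0 ≠ x := Ne.symm (nef (hxc.trans hLR'))
          rcases hS t0 ht0S x hxS hne with he | ⟨w, htw, hwx⟩
          · exact (ncx hnc he.symm hcY.1.symm hxc hLR' ht0b').elim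
          · rcases lt_trichotomy (f w) (f c) with hw | hw | hw
            · exact (ncx hnc htw.symm hcY.1.symm hw hLR' ht0b').elim
            · cases hinj hw; exact hwx
            · rcases lt_trichotomy (f w) (f b) with hw2 | hw2 | hw2
              · exact (ncx hnc hwx.symm hcY.1.symm hxc hw hw2).elim
              · cases hinj hw2
                exact absurd (cuniq x hx ⟨hwx, hx.2.1, hx.2.2⟩) hxne
              · exact (ncx hnc hadj htw ht0a' ht0b' hw2).elim
        have h1 : S.card ≤ G.deg c + 2 := by
          apply count2 (u := c) (v := yr)
          intro s hs
          by_cases hsc : s = c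
          · exact Or.inl hsc
          right
          by_cases hsa : s = a
          · subst hsa; exact Or.inr hcX.1.symm
          by_cases hsb : s = b
          · subst hsb; exact Or.inr hcY.1.symm
          by_cases hsX : isX G f a b s
          · exact Or.inr (c1m s hs hsX hsc)
          by_cases hsY : isY G f a b s
          · exact Or.inl (hyr s hs hsY hsc)
          · exact Or.inr (tadjc s hs hsa hsb hsX hsY).symm
        have h2 := deg_le_maxDeg (G := G) c
        omega
    · -- no common gate
      have hcn : ∀ x y, isX G f a b x → isY G f a b y → x ≠ y :=
        fun x y hx hy h => hc ⟨x, hx, by rw [h]; exact hy⟩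
      have XYlt : ∀ x y, isX G f a b x → isY G f a b y → f x < f y :=
        fun x y hx hy => lt_of_le_of_ne (XYle x y hx hy) (fun h => hcn x y hx hy (hinj h))
      have tfacts : ∀ t ∈ S, t ≠ a → t ≠ b → ¬isX G f a b t → ¬isY G f a b t →
          ∃ xg yg, isX G f a b xg ∧ G.Adj xg t ∧ isY G f a b yg ∧ G.Adj yg t ∧
            (∀ x₂, isX G f a b x₂ → f x₂ < f t ∧ f x₂ ≤ f xg) ∧
            (∀ y₂, isY G f a b y₂ → f t < f y₂ ∧ f yg ≤ f y₂) := by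
        intro t htS hta htb hnX hnY
        obtain ⟨hta', htb'⟩ := hpos t htS hta htb
        rcases aconn t htS hta htb with h | h | ⟨xg, hxg, hxgt⟩
        · exact absurd h hnX
        · exact absurd h hnY
        rcases bconn t htS hta htb with h | h | ⟨yg, hyg, hygt⟩
        · exact absurd h hnX
        · exact absurd h hnY
        have hi : ∀ x₂, isX G f a b x₂ → f x₂ < f t := by
          intro x₂ hx₂
          rcases lt_trichotomy (f x₂) (f t) with h | h | h
          · exact h
          · cases hinj h; exact absurd hx₂ hnX
          · exact (ncx hnc hx₂.1 hygt.symm hta' h (XYlt x₂ yg hx₂ hyg)).elim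
        have hii : ∀ y₂, isY G f a b y₂ → f t < f y₂ := by
          intro y₂ hy₂
          rcases lt_trichotomy (f t) (f y₂) with h | h | h
          · exact h
          · cases hinj h; exact absurd hy₂ hnY
          · exact (ncx hnc hxgt hy₂.1.symm (XYlt xg y₂ hxg hy₂) h htb').elim
        have hiii : ∀ x₂, isX G f a b x₂ → f x₂ ≤ f xg := by
          intro x₂ hx₂
          by_contra hlt
          push_neg at hlt
          exact ncx hnc hx₂.1 hxgt hxg.2.1 hlt (hi x₂ hx₂)
        have hiv : ∀ y₂, isY G f a b y₂ → f yg ≤ f y₂ := by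
          intro y₂ hy₂
          by_contra hlt
          push_neg at hlt
          exact ncx hnc hygt.symm hy₂.1.symm (hii y₂ hy₂) hlt hyg.2.2
        exact ⟨xg, yg, hxg, hxgt, hyg, hygt,
          fun x₂ hx₂ => ⟨hi x₂ hx₂, hiii x₂ hx₂⟩, fun y₂ hy₂ => ⟨hii y₂ hy₂, hiv y₂ hy₂⟩⟩
      have uniqT : ∀ u ∈ S, u ≠ a → u ≠ b → ¬isX G f a b u → ¬isY G f a b u →
          ∀ v ∈ S, v ≠ a → v ≠ b → ¬isX G f a b v → ¬isY G f a b v → u = v := by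
        intro u hu hua hub hXu hYu v hv hva hvb hXv hYv
        obtain ⟨xgu, ygu, hxgu, hxgut, hygu, hygut, hxfu, hyfu⟩ :=
          tfacts u hu hua hub hXu hYu
        obtain ⟨xgv, ygv, hxgv, hxgvt, hygv, hygvt, hxfv, hyfv⟩ :=
          tfacts v hv hva hvb hXv hYv
        have hex : xgu = xgv := hinj (le_antisymm ((hxfv xgu hxgu).2) ((hxfu xgv hxgv).2))
        have hey : ygu = ygv := hinj (le_antisymm ((hyfu ygv hygv).2) ((hyfv ygu hygu).2))
        subst hex
        subst hey
        exact middle_unique hnc hinj hxgut hygut.symm hxgvt hygvt.symm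
          (hxfu xgu hxgu).1 (hyfu ygu hygu).1 (hxfv xgu hxgu).1 (hyfv ygu hygu).1
      obtain ⟨xg, yg, hxg, hxgt, hyg, hygt, hxf, hyf⟩ := tfacts t0 ht0S ht0a ht0b ht0X ht0Y
      have sxfact : ∀ x ∈ S, isX G f a b x → x ≠ xg → G.Adj x xg := by
        intro x hxS hx hxne
        have hxlt : f x < f xg := lt_of_le_of_ne ((hxf x hx).2) (fun h => hxne (hinj h))
        have hxt0 : x ≠ t0 := fun h => by rw [h] at hx; exact ht0X hx
        rcases hS x hxS t0 ht0S hxt0 with he | ⟨w, hxw, hwt⟩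
        · exact (ncx hnc hxg.1 he hx.2.1 hxlt (hxf xg hxg).1).elim
        · rcases lt_trichotomy (f w) (f xg) with hw | hw | hw
          · rcases lt_trichotomy (f w) (f a) with hw2 | hw2 | hw2
            · exact (ncx hnc hwt hadj hw2 ht0a' ht0b').elim
            · cases hinj hw2; exact absurd ⟨hwt, ht0a', ht0b'⟩ ht0X
            · exact (ncx hnc hxg.1 hwt hw2 hw (hxf xg hxg).1).elim
          · cases hinj hw; exact hxw
          · exact (ncx hnc hxg.1 hxw hx.2.1 hxlt hw).elim
      have syfact : ∀ y ∈ S, isY G f a b y → y ≠ yg → G.Adj y yg := by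
        intro y hyS hy hyne
        have hylt : f yg < f y := lt_of_le_of_ne ((hyf y hy).2) (fun h => hyne (hinj h).symm)
        have hyt0 : y ≠ t0 := fun h => by rw [h] at hy; exact ht0Y hy
        rcases hS y hyS t0 ht0S hyt0 with he | ⟨w, hyw, hwt⟩
        · exact (ncx hnc he.symm hyg.1.symm (hyf yg hyg).1 hylt hy.2.2).elim
        · rcases lt_trichotomy (f w) (f yg) with hw | hw | hw
          · exact (ncx hnc hyw.symm hyg.1.symm hw hylt hy.2.2).elim
          · cases hinj hw; exact hyw
          · rcases lt_trichotomy (f w) (f b) with hw2 | hw2 | hw2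
            · exact (ncx hnc hwt.symm hyg.1.symm (hyf yg hyg).1 hw hw2).elim
            · cases hinj hw2; exact absurd ⟨hwt, ht0a', ht0b'⟩ ht0Y
            · exact (ncx hnc hadj hyw hy.2.1 hy.2.2 hw2).elim
      have hnxy : ∀ xp ∈ S, isX G f a b xp → xp ≠ xg →
          ∀ yq ∈ S, isY G f a b yq → yq ≠ yg → False := by
        intro xp hxpS hxp hxpne yq hyqS hyq hyqne
        have o2 : f xp < f xg := lt_of_le_of_ne ((hxf xp hxp).2) (fun h => hxpne (hinj h))
        have o3 : f xg < f yq := XYlt xg yq hxg hyq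
        refine fp xp yq xg (hS xp hxpS yq hyqS (nef (o2.trans o3))) hxg.1
          hxp.2.1 o2 o3 hyq.2.2 ?_ ?_
        · intro h
          exact hcn yq yq ⟨h, hyq.2.1, hyq.2.2⟩ hyq rfl
        · intro h
          exact ncx hnc h hyg.1.symm (XYlt xg yg hxg hyg)
            (lt_of_le_of_ne ((hyf yq hyq).2) (fun hh => hyqne (hinj hh).symm)) hyq.2.2
      by_cases hxp : ∃ xp ∈ S, isX G f a b xp ∧ xp ≠ xg
      · left
        obtain ⟨xp, hxpS, hxpX, hxpne⟩ := hxp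
        have h1 : S.card ≤ G.deg xg + 2 := by
          apply count2 (u := b) (v := xg)
          intro s hs
          by_cases hsb : s = b
          · exact Or.inl hsb
          by_cases hsxg : s = xg
          · exact Or.inr (Or.inl hsxg)
          right; right
          by_cases hsa : s = a
          · subst hsa; exact hxg.1.symm
          by_cases hsX : isX G f a b s
          · exact (sxfact s hs hsX hsxg).symm
          by_cases hsY : isY G f a b s
          · have hsyg : s = yg := by
              by_contra hne
              exact hnxy xp hxpS hxpX hxpne s hs hsY hne
            rw [hsyg]
            by_contra hnadj
            have o2 : f xp < f xg := lt_of_le_of_ne ((hxf xp hxpX).2) (fun h => hxpne (hinj h))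
            have o3 : f xg < f yg := XYlt xg yg hxg hyg
            exact fp xp yg xg (hS xp hxpS yg (hsyg ▸ hs) (nef (o2.trans o3))) hxg.1
              hxpX.2.1 o2 o3
              hyg.2.2 (fun h => hcn yg yg ⟨h, hyg.2.1, hyg.2.2⟩ hyg rfl) hnadj
          · have hst : s = t0 := uniqT s hs hsa hsb hsX hsY t0 ht0S ht0a ht0b ht0X ht0Y
            rw [hst]; exact hxgt
        have h2 := deg_le_maxDeg (G := G) xg
        omega
      · push_neg at hxp
        by_cases hyq : ∃ yq ∈ S, isY G f a b yq ∧ yq ≠ yg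
        · left
          obtain ⟨yq, hyqS, hyqY, hyqne⟩ := hyq
          have h1 : S.card ≤ G.deg yg + 2 := by
            apply count2 (u := a) (v := yg)
            intro s hs
            by_cases hsa : s = a
            · exact Or.inl hsa
            by_cases hsyg : s = yg
            · exact Or.inr (Or.inl hsyg)
            right; right
            by_cases hsb : s = b
            · subst hsb; exact hyg.1.symm
            by_cases hsY : isY G f a b s
            · exact (syfact s hs hsY hsyg).symm
            by_cases hsX : isX G f a b s
            · have hsxg : s = xg := hxp s hs hsX
              rw [hsxg]
              by_contra hnadj
              have hxgX : isX G f a b xg := hsxg ▸ hsX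
              have o2 : f xg < f yg := XYlt xg yg hxgX hyg
              have o3 : f yg < f yq :=
                lt_of_le_of_ne ((hyf yq hyqY).2) (fun h => hyqne (hinj h).symm)
              exact fpm xg yq yg (hS xg (hsxg ▸ hs) yq hyqS (nef (o2.trans o3))) hyg.1
                hxgX.2.1 o2 o3
                hyqY.2.2 (fun h => hcn xg xg hxgX ⟨h, hxgX.2.1, hxgX.2.2⟩ rfl) hnadj
            · have hst : s = t0 := uniqT s hs hsa hsb hsX hsY t0 ht0S ht0a ht0b ht0X ht0Y
              rw [hst]; exact hygt
          have h2 := deg_le_maxDeg (G := G) yg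
          omega
        · push_neg at hyq
          have hsub5 : ∀ s ∈ S, s = a ∨ s = b ∨ s = xg ∨ s = yg ∨ s = t0 := by
            intro s hs
            by_cases hsa : s = a
            · exact Or.inl hsa
            by_cases hsb : s = b
            · exact Or.inr (Or.inl hsb)
            by_cases hsX : isX G f a b s
            · exact Or.inr (Or.inr (Or.inl (hxp s hs hsX)))
            by_cases hsY : isY G f a b s
            · exact Or.inr (Or.inr (Or.inr (Or.inl (hyq s hs hsY))))
            · exact Or.inr (Or.inr (Or.inr (Or.inr
                (uniqT s hs hsa hsb hsX hsY t0 ht0S ht0a ht0b ht0X ht0Y))))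
          have hc5 : S.card ≤ 5 := count5 hsub5
          by_cases hD3 : 3 ≤ G.maxDeg
          · left; omega
          · right
            have p1 : f a < f xg := hxg.2.1
            have p2 : f xg < f t0 := (hxf xg hxg).1
            have p3 : f t0 < f yg := (hyf yg hyg).1
            have p4 : f yg < f b := hyg.2.2
            exact build5 hconn (by omega) a xg t0 yg b
              (nef p1) (nef (p1.trans p2)) (nef ((p1.trans p2).trans p3)) (nef hfab)
              (nef p2) (nef (p2.trans p3)) (nef ((p2.trans p3).trans p4))
              (nef p3) (nef (p3.trans p4)) (nef p4)
              hxg.1 hxgt hygt.symm hyg.1.symm hadj.symm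

end Case1


section MainLemma

variable [Fintype V]

lemma mainLemma (G : SimpleGraph V) (hconn : G.Connected)
    (f : V → ℕ) (hinj : Function.Injective f) (hnc : NC G f)
    (S : Finset V) (hS : SqC G S) :
    S.card ≤ G.maxDeg + 2 ∨ Nonempty (G ≃g cycleGraph 5) := by
  by_cases h2 : S.card ≤ 2
  · left; omega
  have hD2 : 2 ≤ G.maxDeg := by
    obtain ⟨u, v, w, hu, hv, hw, duv, duw, dvw⟩ :=
      (Finset.two_lt_card_iff (s := S)).1 (by omega)
    rcases hS u hu v hv duv with he | ⟨m, hm1, hm2⟩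
    · rcases hS u hu w hw duw with he' | ⟨m, hm1, hm2⟩
      · exact le_trans (deg_ge_two he he' dvw) (deg_le_maxDeg (G := G) u)
      · exact le_trans (deg_ge_two hm1.symm hm2 duw) (deg_le_maxDeg (G := G) m)
    · exact le_trans (deg_ge_two hm1.symm hm2 duv) (deg_le_maxDeg (G := G) m)
  by_cases hk : S.card ≤ 4
  · left; omega
  push_neg at hk
  have hne : S.Nonempty := Finset.card_pos.1 (by omega)
  obtain ⟨a, ha, hmin⟩ := S.exists_min_image f hne
  obtain ⟨b, hb, hmax⟩ := S.exists_max_image f hne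
  have hab : a ≠ b := by
    intro h
    subst h
    have hall : ∀ s ∈ S, s = a := fun s hs => hinj (le_antisymm (hmax s hs) (hmin s hs))
    have : S.card ≤ 1 := Finset.card_le_one.2 (fun x hx y hy => by rw [hall x hx, hall y hy])
    omega
  have hfab : f a < f b := lt_of_le_of_ne (hmin b hb) (fun h => hab (hinj h))
  by_cases hadj : G.Adj a b
  · exact case1 hconn hnc hinj hS ha hb hmin hmax hfab hadj (by omega) hD2
  · by_cases hmid : ∃ w, G.Adj a w ∧ G.Adj w b ∧ f a < f w ∧ f w < f b
    · obtain ⟨m, hh1, hh2, hh3, hh4⟩ := hmid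
      left
      have := case2 hnc hinj hS ha hb hmin hmax hadj hh1 hh2 hh3 hh4
      have := deg_le_maxDeg (G := G) m
      omega
    · obtain ⟨m, hh1, hh2⟩ : ∃ m, G.Adj a m ∧ G.Adj m b := by
        rcases hS a ha b hb hab with he | hcom
        · exact absurd he hadj
        · exact hcom
      left
      have hno : ∀ w, G.Adj a w → G.Adj w b → ¬(f a < f w ∧ f w < f b) := by
        intro w hw1 hw2 hp
        exact hmid ⟨w, hw1, hw2, hp.1, hp.2⟩
      rcases lt_trichotomy (f m) (f a) with hm | hm | hm
      · exact case3 hnc hinj hS ha hb hmin hmax hfab hadj hh1 hh2 hm hno (by omega)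
      · cases hinj hm; exact absurd hh2 hadj
      · rcases lt_trichotomy (f m) (f b) with hm2 | hm2 | hm2
        · exact absurd ⟨m, hh1, hh2, hm, hm2⟩ hmid
        · cases hinj hm2; exact absurd hh1 hadj
        · -- mirror: use the reversed embedding
          set B := Finset.univ.sup f with hB
          have hfB : ∀ v : V, f v ≤ B := fun v => Finset.le_sup (Finset.mem_univ v)
          set f' : V → ℕ := fun v => B - f v with hf'
          have hinj' : Function.Injective f' := by
            intro u v h
            have h1 := hfB u
            have h2 := hfB v
            simp only [hf'] at h
            exact hinj (by omega)
          have hnc' : NC G f' := by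
            intro p q r st h1 h2 hpat
            obtain ⟨o1, o2, o3⟩ := hpat
            have b1 := hfB p
            have b2 := hfB q
            have b3 := hfB r
            have b4 := hfB st
            simp only [hf'] at o1 o2 o3
            exact hnc st r q p h2.symm h1.symm ⟨by omega, by omega, by omega⟩
          have hmin' : ∀ s ∈ S, f' b ≤ f' s := by
            intro s hs
            have := hmax s hs
            have := hfB s
            have := hfB b
            simp only [hf']
            omega
          have hmax' : ∀ s ∈ S, f' s ≤ f' a := by
            intro s hs
            have := hmin s hs
            simp only [hf']
            omega
          have hfab' : f' b < f' a := by
            have := hfB b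
            simp only [hf']
            omega
          have hm' : f' m < f' b := by
            have := hfB m
            simp only [hf']
            omega
          have hno' : ∀ w, G.Adj b w → G.Adj w a → ¬(f' b < f' w ∧ f' w < f' a) := by
            intro w hw1 hw2 hp
            obtain ⟨p1, p2⟩ := hp
            have := hfB w
            have := hfB b
            simp only [hf'] at p1 p2
            exact hno w hw2.symm hw1.symm ⟨by omega, by omega⟩
          exact case3 hnc' hinj' hS hb ha hmin' hmax' hfab' (fun h => hadj h.symm)
            hh2.symm hh1.symm hm' hno' (by omega)

end MainLemma


section C5Part

noncomputable def square_iso {V W : Type*} {G : SimpleGraph V} {H : SimpleGraph W} (e : G ≃g H) :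
    G.square ≃g H.square := by
  refine ⟨e.toEquiv, ?_⟩
  intro u v
  show H.square.Adj (e u) (e v) ↔ G.square.Adj u v
  constructor
  · rintro ⟨hne, h⟩
    refine ⟨fun hh => hne (congrArg e hh), ?_⟩
    rcases h with h | ⟨w, h1, h2⟩
    · exact Or.inl (e.map_adj_iff.mp h)
    · refine Or.inr ⟨e.symm w, ?_, ?_⟩
      · have h1' : H.Adj (e u) (e (e.symm w)) := by simpa using h1
        exact e.map_adj_iff.mp h1'
      · have h2' : H.Adj (e (e.symm w)) (e v) := by simpa using h2
        exact e.map_adj_iff.mp h2'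
  · rintro ⟨hne, h⟩
    refine ⟨fun hh => hne (e.toEquiv.injective hh), ?_⟩
    rcases h with h | ⟨w, h1, h2⟩
    · exact Or.inl (e.map_adj_iff.mpr h)
    · exact Or.inr ⟨e w, e.map_adj_iff.mpr h1, e.map_adj_iff.mpr h2⟩

lemma cyc5_deg (i : Fin 5) : (cycleGraph 5).deg i = 2 := by
  show ((cycleGraph 5).neighborSet i).ncard = 2
  rw [SimpleGraph.cycleGraph_neighborSet (n := 3)]
  have h := (by decide : ∀ j : Fin 5, (j - 1 : Fin 5) ≠ j + 1)
  exact Set.ncard_pair (h i)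

lemma deg_iso {V W : Type*} {G : SimpleGraph V} {H : SimpleGraph W} (e : G ≃g H) (v : V) :
    G.deg v = H.deg (e v) := by
  show (G.neighborSet v).ncard = (H.neighborSet (e v)).ncard
  have him : e '' (G.neighborSet v) = H.neighborSet (e v) := by
    ext w
    constructor
    · rintro ⟨u, hu, rfl⟩
      exact e.map_adj_iff.mpr hu
    · intro hw
      refine ⟨e.symm w, ?_, by simp⟩
      have h1 : H.Adj (e v) (e (e.symm w)) := by simpa using hw
      exact e.map_adj_iff.mp h1
  rw [← him]
  exact (Set.ncard_image_of_injective _ (EquivLike.injective e)).symm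

lemma maxdeg_of_iso5 {V : Type*} [Fintype V] {G : SimpleGraph V} (e : G ≃g cycleGraph 5) :
    G.maxDeg = 2 := by
  have hdeg : ∀ v : V, G.deg v = 2 := fun v => by rw [deg_iso e v, cyc5_deg]
  apply le_antisymm
  · exact Finset.sup_le (fun v _ => (hdeg v).le)
  · have h := deg_le_maxDeg (G := G) (e.symm 0)
    rw [hdeg] at h
    exact h

lemma sq5_adj : ∀ i j : Fin 5, i ≠ j → (cycleGraph 5).square.Adj i j := by
  intro i j h
  refine ⟨h, ?_⟩
  revert i j
  decide

lemma cliqueNum_eq_five {V : Type*} [Fintype V] {G : SimpleGraph V} (e : G ≃g cycleGraph 5) :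
    G.square.cliqueNum = 5 := by
  have hcardV : Fintype.card V = 5 := by
    rw [Fintype.card_congr e.toEquiv, Fintype.card_fin]
  have hub : ∀ n ∈ {n | ∃ s, G.square.IsNClique n s}, n ≤ 5 := by
    rintro n ⟨s, hs⟩
    rw [← hs.2]
    calc s.card ≤ Finset.univ.card := Finset.card_le_univ s
      _ = 5 := by rw [Finset.card_univ, hcardV]
  show sSup {n | ∃ s, G.square.IsNClique n s} = 5
  apply le_antisymm
  · exact csSup_le ⟨0, ∅, ⟨by simp, rfl⟩⟩ hub
  · apply le_csSup ⟨5, hub⟩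
    refine ⟨Finset.univ, ?_, by rw [Finset.card_univ, hcardV]⟩
    intro u hu v hv huv
    have h5 : (cycleGraph 5).square.Adj (e u) (e v) :=
      sq5_adj _ _ (fun h => huv (e.toEquiv.injective h))
    exact (square_iso e).map_adj_iff.mp h5

end C5Part

end Stmt13Aux


/-- For a finite connected outerplanar graph `G` with maximum
degree `Δ`: if `G` is not isomorphic to `C₅` then `ω(G²) ≤ Δ + 2`; moreover for
`G = C₅` one has `ω(G²) = 5 = Δ + 3`. -/
theorem stmt13 {V : Type*} [Fintype V] (G : SimpleGraph V)
    (hout : G.IsOuterplanar) (hconn : G.Connected) :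
    (¬ Nonempty (G ≃g cycleGraph 5) → G.square.cliqueNum ≤ G.maxDeg + 2) ∧
    (Nonempty (G ≃g cycleGraph 5) →
      G.square.cliqueNum = 5 ∧ 5 = G.maxDeg + 3) := by
  obtain ⟨f, hinj, hcross⟩ := hout
  constructor
  · intro hniso
    show sSup {n | ∃ s, G.square.IsNClique n s} ≤ G.maxDeg + 2
    have hub : ∀ n ∈ {n | ∃ s, G.square.IsNClique n s}, n ≤ G.maxDeg + 2 := by
      rintro n ⟨s, hs⟩
      have hSq : Stmt13Aux.SqC G s := by
        intro u hu v hv huv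
        exact (hs.1 (Finset.mem_coe.mpr hu) (Finset.mem_coe.mpr hv) huv).2
      rcases Stmt13Aux.mainLemma G hconn f hinj hcross s hSq with h | h
      · rw [← hs.2]; exact h
      · exact absurd h hniso
    exact csSup_le ⟨0, ∅, ⟨by simp, rfl⟩⟩ hub
  · rintro ⟨e⟩
    refine ⟨Stmt13Aux.cliqueNum_eq_five e, ?_⟩
    rw [Stmt13Aux.maxdeg_of_iso5 e]
end
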